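/- arXiv:2306.08597 — 2 statements merged into one kernel-verified Lean document; each statement's English description precedes it below -/
import Mathlib

section
/- Fix n ≥ 1. The 2^n − 1 rank functions r_{SM_n(I)}, as I ranges over the nonempty subsets of [n], form a basis of the ℝ-vector space of all functions f : 2^{[n]} → ℝ satisfying f(∅) = 0. -/
open MvPolynomial

noncomputable section

/-- The defining recursion for the family of Grothendieck polynomials of permutations of `Fin n`
(written with 0-based positions): `G w₀ = x₀^{n-1} x₁^{n-2} ⋯`, and whenever `w j < w (j+1)`,
`(x_j - x_{j+1}) * G w = f - s_j · f` where `f = (1 - x_{j+1}) * G (w s_j)`. -/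
def IsGrothendieck (n : ℕ) (G : Equiv.Perm (Fin n) → MvPolynomial (Fin n) ℤ) : Prop :=
  G Fin.revPerm = ∏ i : Fin n, X i ^ (n - 1 - (i : ℕ)) ∧
    ∀ (w : Equiv.Perm (Fin n)) (j j' : Fin n), (j : ℕ) + 1 = (j' : ℕ) → w j < w j' →
      (X j - X j') * G w =
        (1 - X j') * G (w * Equiv.swap j j') -
          rename (⇑(Equiv.swap j j')) ((1 - X j') * G (w * Equiv.swap j j'))

/-- `w` is vexillary: it avoids the pattern 2143. -/
def Vexillary {n : ℕ} (w : Equiv.Perm (Fin n)) : Prop :=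
  ¬∃ i j k l : Fin n, i < j ∧ j < k ∧ k < l ∧ w j < w i ∧ w i < w l ∧ w l < w k

/-- The Rothe diagram of `w`, as a set of (row, column) pairs with 1-based indexing:
`D(w) = {(i,j) : i < w⁻¹(j), j < w(i)}`. -/
def RotheDiagram (n : ℕ) (w : Equiv.Perm (Fin n)) : Finset (ℕ × ℕ) :=
  Finset.image (fun p : Fin n × Fin n => ((p.1 : ℕ) + 1, (p.2 : ℕ) + 1))
    (Finset.univ.filter fun p : Fin n × Fin n => p.1 < w.symm p.2 ∧ p.2 < w p.1)

/-- The rank function of the Rothe diagram: `r(i,j) = #{k < i : w(k) < j}` (1-based). -/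
def RotheRank (n : ℕ) (w : Equiv.Perm (Fin n)) (s : ℕ × ℕ) : ℤ :=
  ((Finset.univ.filter fun k : Fin n => (k : ℕ) + 1 < s.1 ∧ (w k : ℕ) + 1 < s.2).card : ℤ)

/-- Two squares are linked with respect to the Rothe rank function:
`i - i' = r(i,j) - r(i',j')`. -/
def RLinked (n : ℕ) (w : Equiv.Perm (Fin n)) (s t : ℕ × ℕ) : Prop :=
  (s.1 : ℤ) - (t.1 : ℤ) = RotheRank n w s - RotheRank n w t

/-- A bubbling diagram: a diagram `D` of squares (row ≥ 1, 1-based), a nonnegative rank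
function `r` and a set `F ⊆ D` of dead squares, such that every dead square has a live square
strictly above it in its column with the prescribed rank difference to the closest such, and
dead squares in the same row have distinct ranks. -/
structure BubblingDiagram where
  D : Finset (ℕ × ℕ)
  r : ℕ × ℕ → ℤ
  F : Finset (ℕ × ℕ)
  F_subset : F ⊆ D
  r_nonneg : ∀ s ∈ D, 0 ≤ r s
  dead_live_above : ∀ s ∈ F, ∃ i' < s.1, (i', s.2) ∈ D ∧ (i', s.2) ∉ F
  dead_rank : ∀ s ∈ F, ∀ i' < s.1, (i', s.2) ∈ D → (i', s.2) ∉ F →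
    (∀ i'', i' < i'' → i'' < s.1 → (i'', s.2) ∈ D → (i'', s.2) ∈ F) →
    r s - r (i', s.2) = (s.1 : ℤ) - (i' : ℤ)
  dead_distinct : ∀ s ∈ F, ∀ t ∈ F, s.1 = t.1 → s.2 ≠ t.2 → r s ≠ r t

/-- A bubbling move: a live square `(i,j)` with `(i-1,j)` empty moves up one row,
its rank decreasing by one. -/
def IsBubbleMove (B C : BubblingDiagram) : Prop :=
  ∃ i j : ℕ, 2 ≤ i ∧ (i, j) ∈ B.D ∧ (i, j) ∉ B.F ∧ (i - 1, j) ∉ B.D ∧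
    C.D = insert (i - 1, j) (B.D.erase (i, j)) ∧ C.F = B.F ∧
    C.r = Function.update B.r (i - 1, j) (B.r (i, j) - 1)

/-- A K-bubbling move: a live square `(i,j)` with `(i-1,j)` empty, and such that no dead square
in row `i` has the same rank as `(i,j)`, moves up one row (rank decreasing by one), leaving
behind a dead copy of itself. -/
def IsKBubbleMove (B C : BubblingDiagram) : Prop :=
  ∃ i j : ℕ, 2 ≤ i ∧ (i, j) ∈ B.D ∧ (i, j) ∉ B.F ∧ (i - 1, j) ∉ B.D ∧
    (∀ k : ℕ, (i, k) ∈ B.F → B.r (i, k) ≠ B.r (i, j)) ∧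
    C.D = insert (i - 1, j) B.D ∧ C.F = insert (i, j) B.F ∧
    C.r = Function.update B.r (i - 1, j) (B.r (i, j) - 1)

/-- `C ∈ BD(B)`: `C` is obtainable from `B` by finitely many bubbling and K-bubbling moves. -/
def InBD (B C : BubblingDiagram) : Prop :=
  Relation.ReflTransGen (fun P Q => IsBubbleMove P Q ∨ IsKBubbleMove P Q) B C

/-- The Rothe bubbling diagram `𝒟(w) = (D(w), r_{D(w)}, ∅)`. -/
def RotheBD (n : ℕ) (w : Equiv.Perm (Fin n)) : BubblingDiagram where
  D := RotheDiagram n w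
  r := RotheRank n w
  F := ∅
  F_subset := Finset.empty_subset _
  r_nonneg := fun _ _ => Int.natCast_nonneg _
  dead_live_above := by simp
  dead_rank := by simp
  dead_distinct := by simp

/-- The weight of a diagram: its `i`-th coordinate is the number of squares in row `i+1`
(1-based row `i+1` corresponds to `i : Fin n`). -/
def diagWt (n : ℕ) (D : Finset (ℕ × ℕ)) (i : Fin n) : ℕ :=
  (D.filter fun s => s.1 = (i : ℕ) + 1).card

/-- Gale order on finite sets of naturals: same cardinality, and the `m`-th smallest element
of `R` is at most the `m`-th smallest element of `S`, for every `m`. -/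
def galeLE (R S : Finset ℕ) : Prop :=
  R.card = S.card ∧ ∀ m < R.card, (R.sort (· ≤ ·)).getD m 0 ≤ (S.sort (· ≤ ·)).getD m 0

/-- Column `j` of a diagram: the set of rows of its squares in column `j`. -/
def diagCol (D : Finset (ℕ × ℕ)) (j : ℕ) : Finset ℕ :=
  (D.filter fun s => s.2 = j).image Prod.fst

/-- Columnwise Gale order on diagrams. -/
def diagLE (C D : Finset (ℕ × ℕ)) : Prop := ∀ j : ℕ, galeLE (diagCol C j) (diagCol D j)

/-- The diagram lies in the grid `[n] × [n]` (1-based). -/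
def InGrid (n : ℕ) (D : Finset (ℕ × ℕ)) : Prop :=
  ∀ s ∈ D, s.1 ∈ Finset.Icc 1 n ∧ s.2 ∈ Finset.Icc 1 n

/-- M-convexity of a set of lattice points. -/
def MConvex {m : ℕ} (S : Set (Fin m → ℤ)) : Prop :=
  ∀ x ∈ S, ∀ y ∈ S, ∀ i : Fin m, y i < x i →
    ∃ j : Fin m, x j < y j ∧ (x - Pi.single i 1 + Pi.single j 1) ∈ S ∧
      (y - Pi.single j 1 + Pi.single i 1) ∈ S

open Classical in
/-- The rank function of the Schubert matroid `SM_n(I)`: the bases are the `B ⊆ [n]` with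
`B ≤ I` in Gale order, and `rank J = max {#(J ∩ B) : B a basis}`. -/
def schubertRank (n : ℕ) (I J : Finset ℕ) : ℕ :=
  ((Finset.Icc 1 n).powerset.filter fun B => galeLE B I).sup fun B => (J ∩ B).card

/-- The Schubert matroid polytope `P(SM_n(I)) ⊆ ℝⁿ`: the convex hull of the 0/1 indicator
vectors of the bases of `SM_n(I)` (coordinate `i : Fin n` stands for the element `i+1`). -/
def schubertPolytope (n : ℕ) (I : Finset ℕ) : Set (Fin n → ℝ) :=
  convexHull ℝ {v | ∃ B : Finset ℕ, B ⊆ Finset.Icc 1 n ∧ galeLE B I ∧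
    v = fun i : Fin n => if (i : ℕ) + 1 ∈ B then (1 : ℝ) else 0}

/-- A Schubitope: a finite Minkowski sum of Schubert matroid polytopes of nonempty
subsets of `[n]`. -/
def IsSchubitope (n : ℕ) (P : Set (Fin n → ℝ)) : Prop :=
  ∃ (k : ℕ) (I : Fin k → Finset ℕ), (∀ j, (I j).Nonempty ∧ I j ⊆ Finset.Icc 1 n) ∧
    P = {x | ∃ p : Fin k → Fin n → ℝ, (∀ j, p j ∈ schubertPolytope n (I j)) ∧ x = ∑ j, p j}

/-- A generalized permutahedron: the polytope cut out by a submodular function `z`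
with `z(∅) = 0`. -/
def IsGenPermutahedron {m : ℕ} (P : Set (Fin m → ℝ)) : Prop :=
  ∃ z : Finset (Fin m) → ℝ, z ∅ = 0 ∧
    (∀ A B : Finset (Fin m), z (A ∪ B) + z (A ∩ B) ≤ z A + z B) ∧
    P = {t | (∀ A : Finset (Fin m), ∑ i ∈ A, t i ≤ z A) ∧ ∑ i, t i = z Finset.univ}

/-- The padding sets `S^{(k,s)}`: `S^{(0,s)} = S` and `S^{(k,s)}` is obtained from
`S^{(k-1,s)}` by inserting the largest `i ∈ [1, s)` not already present (when one exists). -/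
def pad (S : Finset ℕ) (s : ℕ) : ℕ → Finset ℕ
  | 0 => S
  | k + 1 =>
      if h : ((Finset.Ico 1 s).filter fun i => i ∉ pad S s k).Nonempty then
        insert (((Finset.Ico 1 s).filter fun i => i ∉ pad S s k).max' h) (pad S s k)
      else pad S s k

/-- `d = s - #{i ∈ S : i ≤ s}`. -/
def padDepth (S : Finset ℕ) (s : ℕ) : ℕ := s - (S.filter fun i => i ≤ s).card

/-- The order `I ≺ J`: `max (I \ J) ≤ max (J \ I)` (with the convention `max ∅ = 0`). -/
def maxPrec (I J : Finset ℕ) : Prop := (I \ J).sup id ≤ (J \ I).sup id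

/-- Rows of the live squares of column `j` of a bubbling diagram. -/
def liveCol (B : BubblingDiagram) (j : ℕ) : Finset ℕ :=
  ((B.D \ B.F).filter fun s => s.2 = j).image Prod.fst

/-- The row of the `a`-th highest live square of column `j` (`a` is 1-based; highest means
smallest row index). -/
def nthLiveRow (B : BubblingDiagram) (j a : ℕ) : ℕ :=
  ((liveCol B j).sort (· ≤ ·)).getD (a - 1) 0

/-- The number of squares of `D` strictly below `s` in its column. -/
def belowCount (D : Finset (ℕ × ℕ)) (s : ℕ × ℕ) : ℕ :=
  (D.filter fun t => t.2 = s.2 ∧ s.1 < t.1).card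

/-- The total order `≺` on the squares of a diagram: lower rows first; within a row, fewer
squares below first; ties broken by smaller column index. -/
def sqPrec (D : Finset (ℕ × ℕ)) (s t : ℕ × ℕ) : Prop :=
  t.1 < s.1 ∨ (s.1 = t.1 ∧ belowCount D s < belowCount D t) ∨
    (s.1 = t.1 ∧ belowCount D s = belowCount D t ∧ s.2 < t.2)

end



/-- Bridge: for a sorted list, the m-th entry is ≤ t iff at least m+1 entries are ≤ t. -/
lemma fgsSortedGetD : ∀ (L : List ℕ), L.Pairwise (· ≤ ·) → ∀ (m t : ℕ), m < L.length →
    (L.getD m 0 ≤ t ↔ m + 1 ≤ L.countP (fun x => decide (x ≤ t))) := by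
  intro L
  induction L with
  | nil => intro _ m t hm; simp at hm
  | cons a L ih =>
    intro hs m t hm
    rw [List.pairwise_cons] at hs
    obtain ⟨ha, hL⟩ := hs
    rw [List.countP_cons]
    match m with
    | 0 =>
      simp only [List.getD_cons_zero]
      constructor
      · intro h; simp [h]
      · intro h
        by_contra hat
        push_neg at hat
        have h0 : L.countP (fun x => decide (x ≤ t)) = 0 := by
          rw [List.countP_eq_zero]
          intro b hb
          simp only [decide_eq_true_eq]
          exact fun hbt => absurd (le_trans (ha b hb) hbt) (not_le.mpr hat)
        simp [h0, not_le.mpr hat] at h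
    | m + 1 =>
      rw [List.getD_cons_succ]
      have hm' : m < L.length := by simpa using hm
      by_cases hat : a ≤ t
      · rw [if_pos (by simpa using hat), ih hL m t hm']
        omega
      · have h0 : L.countP (fun x => decide (x ≤ t)) = 0 := by
          rw [List.countP_eq_zero]
          intro b hb
          simp only [decide_eq_true_eq]
          exact fun hbt => hat (le_trans (ha b hb) hbt)
        have hmem : L.getD m 0 ∈ L := by
          rw [List.getD_eq_getElem L 0 hm']
          exact List.getElem_mem hm'
        rw [if_neg (by simpa using hat), h0]
        constructor
        · intro h; exact absurd (le_trans (ha _ hmem) h) hat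
        · omega

lemma fgsListSumLe : ∀ (L M : List ℕ), L.length = M.length →
    (∀ i < L.length, L.getD i 0 ≤ M.getD i 0) → L.sum ≤ M.sum := by
  intro L
  induction L with
  | nil => intro M h _; simp
  | cons a L ih =>
    intro M hlen hle
    match M with
    | [] => simp at hlen
    | b :: M =>
      simp only [List.sum_cons]
      have h0 := hle 0 (by simp)
      simp only [List.getD_cons_zero] at h0
      have := ih M (by simpa using hlen) (fun i hi => by
        have := hle (i+1) (by simpa using Nat.succ_lt_succ hi)
        simpa using this)
      omega

lemma fgsListEqOfSumEq : ∀ (L M : List ℕ), L.length = M.length →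
    (∀ i < L.length, L.getD i 0 ≤ M.getD i 0) → L.sum = M.sum → L = M := by
  intro L
  induction L with
  | nil => intro M h _ _; exact (List.length_eq_zero_iff.mp h.symm).symm ▸ rfl
  | cons a L ih =>
    intro M hlen hle hsum
    match M with
    | [] => simp at hlen
    | b :: M =>
      have h0 := hle 0 (by simp)
      simp only [List.getD_cons_zero] at h0
      have hlen' : L.length = M.length := by simpa using hlen
      have hle' : ∀ i < L.length, L.getD i 0 ≤ M.getD i 0 := fun i hi => by
        have := hle (i+1) (by simpa using Nat.succ_lt_succ hi)
        simpa using this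
      have hLM : L.sum ≤ M.sum := fgsListSumLe L M hlen' hle'
      simp only [List.sum_cons] at hsum
      have hab : a = b := by omega
      have : L.sum = M.sum := by omega
      rw [hab, ih M hlen' hle' this]

lemma fgsCardFilterCountP (B : Finset ℕ) (t : ℕ) :
    (B.filter (fun x => x ≤ t)).card = (B.sort (· ≤ ·)).countP (fun x => decide (x ≤ t)) := by
  have h1 : ((B.sort (· ≤ ·) : List ℕ) : Multiset ℕ) = B.val := Finset.sort_eq B _
  have h2 : (B.filter (fun x => x ≤ t)).card = Multiset.card (Multiset.filter (fun x => x ≤ t) B.val) := by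
    rw [Finset.card_def, Finset.filter_val]
  rw [h2, ← Multiset.countP_eq_card_filter, ← h1, Multiset.coe_countP]

lemma fgsGetDLeIffCard (B : Finset ℕ) (m t : ℕ) (hm : m < B.card) :
    ((B.sort (· ≤ ·)).getD m 0 ≤ t ↔ m + 1 ≤ (B.filter (fun x => x ≤ t)).card) := by
  rw [fgsCardFilterCountP]
  exact fgsSortedGetD _ (Finset.pairwise_sort B _) m t (by rwa [Finset.length_sort])

/-- counting characterization of Gale order -/
lemma galeLE_iff (B I : Finset ℕ) :
    galeLE B I ↔ B.card = I.card ∧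
      ∀ t, (I.filter (fun x => x ≤ t)).card ≤ (B.filter (fun x => x ≤ t)).card := by
  constructor
  · rintro ⟨hcard, hle⟩
    refine ⟨hcard, fun t => ?_⟩
    set k := (I.filter (fun x => x ≤ t)).card with hk
    rcases Nat.eq_zero_or_pos k with h0 | hpos
    · omega
    have hkI : k ≤ I.card := Finset.card_filter_le _ _
    have hm : k - 1 < I.card := by omega
    have h1 : (I.sort (· ≤ ·)).getD (k-1) 0 ≤ t := by
      rw [fgsGetDLeIffCard I (k-1) t hm]; omega
    have hmB : k - 1 < B.card := by omega
    have h2 : (B.sort (· ≤ ·)).getD (k-1) 0 ≤ t := le_trans (hle (k-1) hmB) h1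
    have := (fgsGetDLeIffCard B (k-1) t hmB).mp h2
    omega
  · rintro ⟨hcard, hcnt⟩
    refine ⟨hcard, fun m hm => ?_⟩
    set t := (I.sort (· ≤ ·)).getD m 0 with ht
    have hmI : m < I.card := hcard ▸ hm
    have h1 : m + 1 ≤ (I.filter (fun x => x ≤ t)).card :=
      (fgsGetDLeIffCard I m t hmI).mp le_rfl
    exact (fgsGetDLeIffCard B m t hm).mpr (le_trans h1 (hcnt t))

lemma galeLE_refl (I : Finset ℕ) : galeLE I I := ⟨rfl, fun _ _ => le_rfl⟩

/-- all elements of B are ≤ n if all of I are -/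
lemma galeLE_mem_le {B I : Finset ℕ} (h : galeLE B I) {t : ℕ} (hI : ∀ s ∈ I, s ≤ t) :
    ∀ b ∈ B, b ≤ t := by
  rw [galeLE_iff] at h
  obtain ⟨hcard, hcnt⟩ := h
  have h1 : (I.filter (fun x => x ≤ t)).card = I.card := by
    rw [Finset.filter_true_of_mem hI]
  have h2 : B.filter (fun x => x ≤ t) = B := by
    apply Finset.eq_of_subset_of_card_le (Finset.filter_subset _ _)
    calc B.card = I.card := hcard
    _ = _ := h1.symm
    _ ≤ _ := hcnt t
  intro b hb
  have : b ∈ B.filter (fun x => x ≤ t) := h2.symm ▸ hb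
  exact (Finset.mem_filter.mp this).2

lemma galeLE_insert_top {B I : Finset ℕ} (h : galeLE B I) {u : ℕ}
    (hB : u ∉ B) (hI : u ∉ I) : galeLE (insert u B) (insert u I) := by
  rw [galeLE_iff] at h ⊢
  obtain ⟨hcard, hcnt⟩ := h
  refine ⟨by rw [Finset.card_insert_of_notMem hB, Finset.card_insert_of_notMem hI, hcard], fun t => ?_⟩
  rw [Finset.filter_insert, Finset.filter_insert]
  by_cases hut : u ≤ t
  · rw [if_pos hut, if_pos hut,
      Finset.card_insert_of_notMem (fun hc => hB (Finset.mem_filter.mp hc).1),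
      Finset.card_insert_of_notMem (fun hc => hI (Finset.mem_filter.mp hc).1)]
    exact Nat.succ_le_succ (hcnt t)
  · rw [if_neg hut, if_neg hut]; exact hcnt t

lemma galeLE_erase_top {B I : Finset ℕ} {u : ℕ} (h : galeLE B I)
    (hB : u ∈ B) (hI : u ∈ I) : galeLE (B.erase u) (I.erase u) := by
  rw [galeLE_iff] at h ⊢
  obtain ⟨hcard, hcnt⟩ := h
  refine ⟨by rw [Finset.card_erase_of_mem hB, Finset.card_erase_of_mem hI, hcard], fun t => ?_⟩
  have hBe : B.filter (fun x => x ≤ t) = if u ≤ t then insert u ((B.erase u).filter (fun x => x ≤ t)) else (B.erase u).filter (fun x => x ≤ t) := by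
    conv_lhs => rw [← Finset.insert_erase hB]
    rw [Finset.filter_insert]
  have hIe : I.filter (fun x => x ≤ t) = if u ≤ t then insert u ((I.erase u).filter (fun x => x ≤ t)) else (I.erase u).filter (fun x => x ≤ t) := by
    conv_lhs => rw [← Finset.insert_erase hI]
    rw [Finset.filter_insert]
  have key := hcnt t
  by_cases hut : u ≤ t
  · rw [hBe, hIe, if_pos hut, if_pos hut,
      Finset.card_insert_of_notMem (fun hc => (Finset.mem_erase.mp (Finset.mem_filter.mp hc).1).1 rfl),
      Finset.card_insert_of_notMem (fun hc => (Finset.mem_erase.mp (Finset.mem_filter.mp hc).1).1 rfl)] at key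
    omega
  · rwa [hBe, hIe, if_neg hut, if_neg hut] at key

/-- inserting any new element x ≤ u into B, while inserting the top element u into I -/
lemma galeLE_insert_any {B I : Finset ℕ} (h : galeLE B I) {u x : ℕ}
    (hx : x ∉ B) (hxu : x ≤ u) (hIu : ∀ s ∈ I, s ≤ u) (hBu : ∀ b ∈ B, b ≤ u) (hI : u ∉ I) :
    galeLE (insert x B) (insert u I) := by
  rw [galeLE_iff] at h ⊢
  obtain ⟨hcard, hcnt⟩ := h
  refine ⟨by rw [Finset.card_insert_of_notMem hx, Finset.card_insert_of_notMem hI, hcard], fun t => ?_⟩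
  rw [Finset.filter_insert, Finset.filter_insert]
  by_cases hut : u ≤ t
  · -- everything is ≤ t
    rw [if_pos hut, if_pos (le_trans hxu hut)]
    have hBall : (insert x B).filter (fun y => y ≤ t) = insert x B := by
      apply Finset.filter_true_of_mem
      intro b hb
      rcases Finset.mem_insert.mp hb with rfl | hb
      · exact le_trans hxu hut
      · exact le_trans (hBu b hb) hut
    have hIall : (insert u I).filter (fun y => y ≤ t) = insert u I := by
      apply Finset.filter_true_of_mem
      intro s hs
      rcases Finset.mem_insert.mp hs with rfl | hs
      · exact hut
      · exact le_trans (hIu s hs) hut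
    rw [Finset.filter_insert] at hBall hIall
    rw [if_pos (le_trans hxu hut)] at hBall
    rw [if_pos hut] at hIall
    rw [hBall, hIall, Finset.card_insert_of_notMem hx, Finset.card_insert_of_notMem hI, hcard]
  · rw [if_neg hut]
    have h1 : (I.filter (fun y => y ≤ t)).card ≤ (B.filter (fun y => y ≤ t)).card := hcnt t
    by_cases hxt : x ≤ t
    · rw [if_pos hxt, Finset.card_insert_of_notMem (fun hc => hx (Finset.mem_filter.mp hc).1)]
      omega
    · rw [if_neg hxt]; exact h1

lemma fgsSortSum (J : Finset ℕ) : (J.sort (· ≤ ·)).sum = ∑ x ∈ J, x := by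
  have h1 : ((J.sort (· ≤ ·) : List ℕ) : Multiset ℕ) = J.val := Finset.sort_eq J _
  have h2 : ∑ x ∈ J, x = (Multiset.map id J.val).sum := rfl
  rw [h2, Multiset.map_id, ← h1, Multiset.sum_coe]

lemma galeLE_sum_lt {J I : Finset ℕ} (h : galeLE J I) (hne : J ≠ I) :
    ∑ x ∈ J, x < ∑ x ∈ I, x := by
  obtain ⟨hcard, hle⟩ := h
  have hlen : (J.sort (· ≤ ·)).length = (I.sort (· ≤ ·)).length := by
    rw [Finset.length_sort, Finset.length_sort, hcard]
  have hle' : ∀ i < (J.sort (· ≤ ·)).length, (J.sort (· ≤ ·)).getD i 0 ≤ (I.sort (· ≤ ·)).getD i 0 := by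
    intro i hi
    exact hle i (by rwa [Finset.length_sort] at hi)
  have hsum : (J.sort (· ≤ ·)).sum ≤ (I.sort (· ≤ ·)).sum := fgsListSumLe _ _ hlen hle'
  rcases lt_or_eq_of_le hsum with hlt | heq
  · rwa [fgsSortSum, fgsSortSum] at hlt
  · exfalso
    have := fgsListEqOfSumEq _ _ hlen hle' heq
    apply hne
    rw [← Finset.sort_toFinset J (· ≤ ·), ← Finset.sort_toFinset I (· ≤ ·), this]

lemma srank_le_card (n : ℕ) (I J : Finset ℕ) : schubertRank n I J ≤ J.card := by
  unfold schubertRank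
  apply Finset.sup_le
  intro B _
  exact Finset.card_le_card Finset.inter_subset_left

lemma le_srank (n : ℕ) (I J B : Finset ℕ) (hB : B ⊆ Finset.Icc 1 n) (hg : galeLE B I) :
    (J ∩ B).card ≤ schubertRank n I J := by
  classical
  unfold schubertRank
  exact Finset.le_sup (f := fun B => (J ∩ B).card)
    (by simp only [Finset.mem_filter, Finset.mem_powerset]; exact ⟨hB, hg⟩)

lemma rank_succ_eq (n : ℕ) (I J : Finset ℕ) (hI : ∀ s ∈ I, s ≤ n) :
    schubertRank (n+1) I J = schubertRank n I J := by
  classical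
  unfold schubertRank
  congr 1
  ext B
  simp only [Finset.mem_filter, Finset.mem_powerset]
  constructor
  · rintro ⟨hB, hg⟩
    refine ⟨fun b hb => ?_, hg⟩
    have h1 := hB hb
    rw [Finset.mem_Icc] at h1 ⊢
    exact ⟨h1.1, galeLE_mem_le hg hI b hb⟩
  · rintro ⟨hB, hg⟩
    exact ⟨fun b hb => by
      have h1 := hB hb
      rw [Finset.mem_Icc] at h1 ⊢
      omega, hg⟩

lemma rank_insert_notmem (N : ℕ) (I J : Finset ℕ) (u t : ℕ) (hI : ∀ s ∈ I, s ≤ t) (hu : t < u) :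
    schubertRank N I (insert u J) = schubertRank N I J := by
  classical
  unfold schubertRank
  apply Finset.sup_congr rfl
  intro B hB
  simp only [Finset.mem_filter, Finset.mem_powerset] at hB
  have huB : u ∉ B := fun hc => absurd (galeLE_mem_le hB.2 hI u hc) (by omega)
  rw [Finset.insert_inter_of_notMem huB]

/-- `J` is independent in `SM_m(I)` -/
def SInd (m : ℕ) (I J : Finset ℕ) : Prop :=
  ∃ B, B ⊆ Finset.Icc 1 m ∧ galeLE B I ∧ J ⊆ B

lemma srank_mono (n : ℕ) (I : Finset ℕ) {J J' : Finset ℕ} (h : J ⊆ J') :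
    schubertRank n I J ≤ schubertRank n I J' := by
  classical
  unfold schubertRank
  apply Finset.sup_le
  intro B hB
  exact le_trans (Finset.card_le_card (Finset.inter_subset_inter_right h)) (Finset.le_sup (f := fun B => (J' ∩ B).card) hB)

open Classical in
lemma srank_delta (n : ℕ) (I' J : Finset ℕ) (hI' : I' ⊆ Finset.Icc 1 n) (hJ : J ⊆ Finset.Icc 1 n) :
    schubertRank (n+1) (insert (n+1) I') (insert (n+1) J)
      = schubertRank (n+1) (insert (n+1) I') J + (if SInd n I' J then 1 else 0) := by
  classical
  have hJn : ∀ x ∈ J, x ≤ n := fun x hx => (Finset.mem_Icc.mp (hJ hx)).2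
  have hIn : ∀ x ∈ I', x ≤ n := fun x hx => (Finset.mem_Icc.mp (hI' hx)).2
  have hnJ : (n+1) ∉ J := fun hc => by have := hJn _ hc; omega
  have hnI : (n+1) ∉ I' := fun hc => by have := hIn _ hc; omega
  by_cases hind : SInd n I' J
  · rw [if_pos hind]
    obtain ⟨B', hB'sub, hB'g, hJB'⟩ := hind
    have hB'n : ∀ x ∈ B', x ≤ n := fun x hx => (Finset.mem_Icc.mp (hB'sub hx)).2
    have hnB' : (n+1) ∉ B' := fun hc => by have := hB'n _ hc; omega
    set C := insert (n+1) B' with hC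
    have hCsub : C ⊆ Finset.Icc 1 (n+1) := by
      intro b hb
      rcases Finset.mem_insert.mp hb with rfl | hb
      · simp
      · have := Finset.mem_Icc.mp (hB'sub hb); rw [Finset.mem_Icc]; omega
    have hCg : galeLE C (insert (n+1) I') := galeLE_insert_top hB'g hnB' hnI
    have hJC : J ∩ C = J := Finset.inter_eq_left.mpr (hJB'.trans (Finset.subset_insert _ _))
    have h1 : schubertRank (n+1) (insert (n+1) I') J = J.card := by
      refine le_antisymm (srank_le_card _ _ _) ?_
      have := le_srank (n+1) (insert (n+1) I') J C hCsub hCg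
      rwa [hJC] at this
    have h2 : (insert (n+1) J) ∩ C = insert (n+1) J := by
      rw [Finset.insert_inter_of_mem (Finset.mem_insert_self _ _), hJC]
    have h3 : J.card + 1 ≤ schubertRank (n+1) (insert (n+1) I') (insert (n+1) J) := by
      have := le_srank (n+1) (insert (n+1) I') (insert (n+1) J) C hCsub hCg
      rwa [h2, Finset.card_insert_of_notMem hnJ] at this
    have h4 : schubertRank (n+1) (insert (n+1) I') (insert (n+1) J) ≤ J.card + 1 := by
      have := srank_le_card (n+1) (insert (n+1) I') (insert (n+1) J)
      rwa [Finset.card_insert_of_notMem hnJ] at this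
    omega
  · rw [if_neg hind, add_zero]
    refine le_antisymm ?_ (srank_mono _ _ (Finset.subset_insert _ _))
    unfold schubertRank
    apply Finset.sup_le
    intro B hB
    simp only [Finset.mem_filter, Finset.mem_powerset] at hB
    obtain ⟨hBsub, hBg⟩ := hB
    by_cases hnB : (n+1) ∈ B
    · set B'' := B.erase (n+1) with hB''
      have hgB'' : galeLE B'' I' := by
        have := galeLE_erase_top hBg hnB (Finset.mem_insert_self _ _)
        rwa [Finset.erase_insert hnI] at this
      have hB''sub : B'' ⊆ Finset.Icc 1 n := by
        intro b hb
        have h1 := Finset.mem_erase.mp hb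
        have h2 := Finset.mem_Icc.mp (hBsub h1.2)
        rw [Finset.mem_Icc]
        omega
      have hJB'' : ¬ J ⊆ B'' := fun hc => hind ⟨B'', hB''sub, hgB'', hc⟩
      obtain ⟨x, hxJ, hxB''⟩ := Finset.not_subset.mp hJB''
      have hBhat : galeLE (insert x B'') (insert (n+1) I') :=
        galeLE_insert_any hgB'' hxB'' (by have := hJn x hxJ; omega) (fun s hs => by have := hIn s hs; omega)
          (fun b hb => by have := (Finset.mem_Icc.mp (hB''sub hb)).2; omega) hnI
      have hBhatsub : insert x B'' ⊆ Finset.Icc 1 (n+1) := by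
        intro b hb
        rcases Finset.mem_insert.mp hb with rfl | hb
        · have := Finset.mem_Icc.mp (hJ hxJ); rw [Finset.mem_Icc]; omega
        · have := Finset.mem_Icc.mp (hB''sub hb); rw [Finset.mem_Icc]; omega
      have key := le_srank (n+1) (insert (n+1) I') J (insert x B'') hBhatsub hBhat
      have hc1 : (insert (n+1) J) ∩ B = insert (n+1) (J ∩ B'') := by
        rw [Finset.insert_inter_of_mem hnB]
        congr 1
        rw [hB'']
        ext y
        simp only [Finset.mem_inter, Finset.mem_erase]
        constructor
        · rintro ⟨h1, h2⟩; exact ⟨h1, fun hc => hnJ (hc ▸ h1), h2⟩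
        · rintro ⟨h1, _, h3⟩; exact ⟨h1, h3⟩
      have hc2 : J ∩ (insert x B'') = insert x (J ∩ B'') := by
        rw [Finset.inter_insert_of_mem hxJ]
      have hxmem : x ∉ J ∩ B'' := fun hc => hxB'' (Finset.mem_inter.mp hc).2
      have hnmem : (n+1) ∉ J ∩ B'' := fun hc => hnJ (Finset.mem_inter.mp hc).1
      rw [hc1, Finset.card_insert_of_notMem hnmem]
      rw [hc2, Finset.card_insert_of_notMem hxmem] at key
      exact key
    · rw [Finset.insert_inter_of_notMem hnB]
      exact le_srank (n+1) (insert (n+1) I') J B hBsub hBg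

def fgsMu (m : ℕ) (I : Finset ℕ) : ℕ := (m * m + 1) * I.card + ∑ x ∈ I, x

lemma fgsSumLeBound {m : ℕ} {I : Finset ℕ} (hI : I ⊆ Finset.Icc 1 m) : ∑ x ∈ I, x ≤ m * m := by
  calc ∑ x ∈ I, x ≤ ∑ _x ∈ I, m := Finset.sum_le_sum (fun x hx => (Finset.mem_Icc.mp (hI hx)).2)
  _ = I.card * m := by rw [Finset.sum_const, smul_eq_mul]
  _ ≤ m * m := by
      have : I.card ≤ m := by
        have := Finset.card_le_card hI
        simpa using this
      exact Nat.mul_le_mul_right m this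

lemma fgsMuLeBound {m : ℕ} {I : Finset ℕ} (hI : I ⊆ Finset.Icc 1 m) :
    fgsMu m I ≤ (m * m + 1) * m + m * m := by
  unfold fgsMu
  have h1 : I.card ≤ m := by have := Finset.card_le_card hI; simpa using this
  have h2 := fgsSumLeBound hI
  have := Nat.mul_le_mul_left (m*m+1) h1
  omega

lemma fgsMuLt {m : ℕ} {I J : Finset ℕ} (hI : I ⊆ Finset.Icc 1 m) (hJ : J ⊆ Finset.Icc 1 m)
    (h : SInd m I J) (hne : J ≠ I) : fgsMu m J < fgsMu m I := by
  obtain ⟨B, hBsub, hBg, hJB⟩ := h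
  rcases hJB.eq_or_ssubset with rfl | hss
  · -- J = B : galeLE J I with J ≠ I
    have hsum := galeLE_sum_lt hBg hne
    unfold fgsMu
    rw [hBg.1]
    omega
  · -- |J| < |B| = |I|
    have hcard : J.card < I.card := by
      calc J.card < B.card := Finset.card_lt_card hss
      _ = I.card := hBg.1
    have h2 : ∑ x ∈ J, x ≤ m * m := fgsSumLeBound hJ
    unfold fgsMu
    calc (m * m + 1) * J.card + ∑ x ∈ J, x < (m * m + 1) * J.card + (m * m + 1) := by omega
    _ = (m * m + 1) * (J.card + 1) := (Nat.mul_succ _ _).symm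
    _ ≤ (m * m + 1) * I.card := Nat.mul_le_mul_left _ hcard
    _ ≤ (m * m + 1) * I.card + ∑ x ∈ I, x := Nat.le_add_right _ _

open Classical in
lemma sind_indep (m : ℕ) (e : Finset ℕ → ℝ)
    (h : ∀ J ∈ (Finset.Icc 1 m).powerset,
      ∑ I ∈ (Finset.Icc 1 m).powerset, e I * (if SInd m I J then (1:ℝ) else 0) = 0) :
    ∀ I ∈ (Finset.Icc 1 m).powerset, e I = 0 := by
  suffices H : ∀ k, ∀ I ∈ (Finset.Icc 1 m).powerset,
      (m * m + 1) * m + m * m + 1 ≤ fgsMu m I + k → e I = 0 by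
    intro I hI
    exact H ((m * m + 1) * m + m * m + 1) I hI (Nat.le_add_left _ _)
  intro k
  induction k with
  | zero =>
    intro I hI hk
    exfalso
    have := fgsMuLeBound (Finset.mem_powerset.mp hI)
    omega
  | succ k ih =>
    intro I hI hk
    have hrel := h I hI
    rw [Finset.sum_eq_single_of_mem I hI] at hrel
    · have hII : SInd m I I := ⟨I, Finset.mem_powerset.mp hI, galeLE_refl I, subset_rfl⟩
      rw [if_pos hII, mul_one] at hrel
      exact hrel
    · intro I' hI' hne
      by_cases hind : SInd m I' I
      · have hmu : fgsMu m I < fgsMu m I' :=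
          fgsMuLt (Finset.mem_powerset.mp hI') (Finset.mem_powerset.mp hI) hind
            (fun hc => hne hc.symm)
        rw [ih I' hI' (by omega), zero_mul]
      · rw [if_neg hind, mul_zero]

lemma fgsSubsetIccSucc {n : ℕ} {I : Finset ℕ} (hn : (n+1) ∉ I) :
    I ⊆ Finset.Icc 1 (n+1) ↔ I ⊆ Finset.Icc 1 n := by
  constructor
  · intro h x hx
    have h1 := Finset.mem_Icc.mp (h hx)
    rw [Finset.mem_Icc]
    have : x ≠ n + 1 := fun hc => hn (hc ▸ hx)
    omega
  · intro h x hx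
    have h1 := Finset.mem_Icc.mp (h hx)
    rw [Finset.mem_Icc]
    omega

lemma key_indep : ∀ (n : ℕ) (d : Finset ℕ → ℝ),
    (∀ J ∈ (Finset.Icc 1 n).powerset,
      ∑ I ∈ (Finset.Icc 1 n).powerset.erase ∅, d I * (schubertRank n I J : ℝ) = 0) →
    ∀ I ∈ (Finset.Icc 1 n).powerset.erase ∅, d I = 0 := by
  intro n
  induction n with
  | zero =>
    intro d h I hI
    rw [Finset.Icc_eq_empty (by omega)] at hI
    simp at hI
  | succ n ih =>
    intro d h
    have hIccmono : Finset.Icc 1 n ⊆ Finset.Icc 1 (n+1) := Finset.Icc_subset_Icc_right (by omega)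
    -- the subsets of Icc 1 (n+1) not containing n+1, as a finset
    have hfilter : ((Finset.Icc 1 (n+1)).powerset.erase ∅).filter (fun I => ¬ (n+1) ∈ I)
        = (Finset.Icc 1 n).powerset.erase ∅ := by
      ext I
      simp only [Finset.mem_filter, Finset.mem_erase, Finset.mem_powerset]
      constructor
      · rintro ⟨⟨hne, hsub⟩, hmem⟩
        exact ⟨hne, (fgsSubsetIccSucc hmem).mp hsub⟩
      · rintro ⟨hne, hsub⟩
        have hm : (n+1) ∉ I := fun hc => by
          have := Finset.mem_Icc.mp (hsub hc); omega
        exact ⟨⟨hne, hsub.trans hIccmono⟩, hm⟩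
    -- Step A: coefficients of sets containing n+1 vanish
    have hA : ∀ I' ∈ (Finset.Icc 1 n).powerset, d (insert (n+1) I') = 0 := by
      apply sind_indep n (fun I' => d (insert (n+1) I'))
      intro J hJ
      have hJsub : J ⊆ Finset.Icc 1 n := Finset.mem_powerset.mp hJ
      have hJsub' : insert (n+1) J ⊆ Finset.Icc 1 (n+1) := by
        intro x hx
        rcases Finset.mem_insert.mp hx with rfl | hx
        · rw [Finset.mem_Icc]; omega
        · exact hIccmono (hJsub hx)
      have h1 := h (insert (n+1) J) (Finset.mem_powerset.mpr hJsub')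
      have h2 := h J (Finset.mem_powerset.mpr (hJsub.trans hIccmono))
      have h3 : ∑ I ∈ (Finset.Icc 1 (n+1)).powerset.erase ∅,
          d I * ((schubertRank (n+1) I (insert (n+1) J) : ℝ) - (schubertRank (n+1) I J : ℝ)) = 0 := by
        have : ∑ I ∈ (Finset.Icc 1 (n+1)).powerset.erase ∅,
            d I * ((schubertRank (n+1) I (insert (n+1) J) : ℝ) - (schubertRank (n+1) I J : ℝ))
            = ∑ I ∈ (Finset.Icc 1 (n+1)).powerset.erase ∅,
              (d I * (schubertRank (n+1) I (insert (n+1) J) : ℝ) - d I * (schubertRank (n+1) I J : ℝ)) := by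
          apply Finset.sum_congr rfl; intro I _; ring
        rw [this, Finset.sum_sub_distrib, h1, h2, sub_zero]
      rw [← Finset.sum_filter_add_sum_filter_not ((Finset.Icc 1 (n+1)).powerset.erase ∅)
        (fun I => (n+1) ∈ I)] at h3
      have hzero : ∑ I ∈ ((Finset.Icc 1 (n+1)).powerset.erase ∅).filter (fun I => ¬ (n+1) ∈ I),
          d I * ((schubertRank (n+1) I (insert (n+1) J) : ℝ) - (schubertRank (n+1) I J : ℝ)) = 0 := by
        apply Finset.sum_eq_zero
        intro I hI
        rw [hfilter] at hI
        have hsub : I ⊆ Finset.Icc 1 n := Finset.mem_powerset.mp (Finset.mem_erase.mp hI).2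
        rw [rank_insert_notmem (n+1) I J (n+1) n (fun s hs => (Finset.mem_Icc.mp (hsub hs)).2) (by omega)]
        ring
      rw [hzero, add_zero] at h3
      refine Eq.trans ?_ h3
      symm
      apply Finset.sum_nbij' (fun I => I.erase (n+1)) (fun I' => insert (n+1) I')
      · intro I hI
        simp only [Finset.mem_filter, Finset.mem_erase, Finset.mem_powerset] at hI
        obtain ⟨⟨hne, hsub⟩, hmem⟩ := hI
        rw [Finset.mem_powerset]
        intro x hx
        have h1 := Finset.mem_erase.mp hx
        have h2 := Finset.mem_Icc.mp (hsub h1.2)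
        rw [Finset.mem_Icc]
        omega
      · intro I' hI'
        have hsub := Finset.mem_powerset.mp hI'
        simp only [Finset.mem_filter, Finset.mem_erase, Finset.mem_powerset]
        refine ⟨⟨?_, ?_⟩, Finset.mem_insert_self _ _⟩
        · exact Finset.insert_ne_empty _ _
        · intro x hx
          rcases Finset.mem_insert.mp hx with rfl | hx
          · rw [Finset.mem_Icc]; omega
          · exact hIccmono (hsub hx)
      · intro I hI
        simp only [Finset.mem_filter] at hI
        exact Finset.insert_erase hI.2
      · intro I' hI'
        have hsub := Finset.mem_powerset.mp hI'
        have : (n+1) ∉ I' := fun hc => by have := Finset.mem_Icc.mp (hsub hc); omega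
        exact Finset.erase_insert this
      · intro I hI
        simp only [Finset.mem_filter, Finset.mem_erase, Finset.mem_powerset] at hI
        obtain ⟨⟨hne, hsub⟩, hmem⟩ := hI
        have hI'sub : I.erase (n+1) ⊆ Finset.Icc 1 n := by
          intro x hx
          have h1 := Finset.mem_erase.mp hx
          have h2 := Finset.mem_Icc.mp (hsub h1.2)
          rw [Finset.mem_Icc]
          omega
        have hdelta := srank_delta n (I.erase (n+1)) J hI'sub hJsub
        rw [Finset.insert_erase hmem] at hdelta
        rw [hdelta, Finset.insert_erase hmem]
        push_cast
        rw [add_sub_cancel_left]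
    -- Step B: restriction to subsets of Icc 1 n
    have hB : ∀ I ∈ (Finset.Icc 1 n).powerset.erase ∅, d I = 0 := by
      apply ih
      intro J hJ
      have hJsub : J ⊆ Finset.Icc 1 n := Finset.mem_powerset.mp hJ
      have h2 := h J (Finset.mem_powerset.mpr (hJsub.trans hIccmono))
      rw [← Finset.sum_filter_add_sum_filter_not ((Finset.Icc 1 (n+1)).powerset.erase ∅)
        (fun I => (n+1) ∈ I)] at h2
      have hz1 : ∑ I ∈ ((Finset.Icc 1 (n+1)).powerset.erase ∅).filter (fun I => (n+1) ∈ I),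
          d I * (schubertRank (n+1) I J : ℝ) = 0 := by
        apply Finset.sum_eq_zero
        intro I hI
        simp only [Finset.mem_filter, Finset.mem_erase, Finset.mem_powerset] at hI
        obtain ⟨⟨hne, hsub⟩, hmem⟩ := hI
        have hI'sub : I.erase (n+1) ∈ (Finset.Icc 1 n).powerset := by
          rw [Finset.mem_powerset]
          intro x hx
          have h1 := Finset.mem_erase.mp hx
          have h2 := Finset.mem_Icc.mp (hsub h1.2)
          rw [Finset.mem_Icc]
          omega
        have := hA (I.erase (n+1)) hI'sub
        rw [Finset.insert_erase hmem] at this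
        rw [this, zero_mul]
      rw [hz1, zero_add, hfilter] at h2
      rw [← h2]
      apply Finset.sum_congr rfl
      intro I hI
      have hsub : I ⊆ Finset.Icc 1 n := Finset.mem_powerset.mp (Finset.mem_erase.mp hI).2
      rw [rank_succ_eq n I J (fun s hs => (Finset.mem_Icc.mp (hsub hs)).2)]
    -- conclude
    intro I hI
    simp only [Finset.mem_erase, Finset.mem_powerset] at hI
    obtain ⟨hne, hsub⟩ := hI
    by_cases hmem : (n+1) ∈ I
    · have hI'sub : I.erase (n+1) ∈ (Finset.Icc 1 n).powerset := by
        rw [Finset.mem_powerset]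
        intro x hx
        have h1 := Finset.mem_erase.mp hx
        have h2 := Finset.mem_Icc.mp (hsub h1.2)
        rw [Finset.mem_Icc]
        omega
      have := hA (I.erase (n+1)) hI'sub
      rwa [Finset.insert_erase hmem] at this
    · apply hB
      simp only [Finset.mem_erase, Finset.mem_powerset]
      exact ⟨hne, (fgsSubsetIccSucc hmem).mp hsub⟩

lemma srank_empty (n : ℕ) (I : Finset ℕ) : schubertRank n I ∅ = 0 := by
  unfold schubertRank
  refine Nat.le_antisymm (Finset.sup_le fun B _ => ?_) (Nat.zero_le _)
  simp


theorem stmt_3 (n : ℕ) (hn : 1 ≤ n) (f : Finset ℕ → ℝ) (hf : f ∅ = 0) :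
    ∃! c : Finset ℕ → ℝ,
      (∀ I : Finset ℕ, I ∉ ((Finset.Icc 1 n).powerset.erase ∅) → c I = 0) ∧
      ∀ J ⊆ Finset.Icc 1 n,
        f J = ∑ I ∈ (Finset.Icc 1 n).powerset.erase ∅,
          c I * (schubertRank n I J : ℝ) := by
  classical
  set s : Finset (Finset ℕ) := (Finset.Icc 1 n).powerset.erase ∅ with hs
  let L : ({ x // x ∈ s } → ℝ) →ₗ[ℝ] ({ x // x ∈ s } → ℝ) :=
    { toFun := fun c J => ∑ I : { x // x ∈ s }, c I * (schubertRank n (I : Finset ℕ) (J : Finset ℕ) : ℝ)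
      map_add' := by
        intro c₁ c₂
        funext J
        simp [add_mul, Finset.sum_add_distrib]
      map_smul' := by
        intro r c
        funext J
        simp [Finset.mul_sum, mul_assoc] }
  have conv1 : ∀ (c : { x // x ∈ s } → ℝ) (J : Finset ℕ),
      ∑ I ∈ s, (if h : I ∈ s then c ⟨I, h⟩ else 0) * (schubertRank n I J : ℝ)
        = ∑ I : { x // x ∈ s }, c I * (schubertRank n (I : Finset ℕ) J : ℝ) := by
    intro c J
    rw [← Finset.sum_coe_sort s (fun I => (if h : I ∈ s then c ⟨I, h⟩ else 0) * (schubertRank n I J : ℝ))]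
    apply Finset.sum_congr rfl
    intro I _
    rw [dif_pos I.2]
  -- injectivity
  have hLinj : Function.Injective L := by
    rw [injective_iff_map_eq_zero]
    intro c hc
    set d : Finset ℕ → ℝ := fun I => if h : I ∈ s then c ⟨I, h⟩ else 0 with hd
    have hkey : ∀ I ∈ s, d I = 0 := by
      apply key_indep n d
      intro J hJ
      by_cases hJe : J = ∅
      · subst hJe
        apply Finset.sum_eq_zero
        intro I _
        rw [srank_empty, Nat.cast_zero, mul_zero]
      · have hJs : J ∈ s := by
          rw [hs, Finset.mem_erase]
          exact ⟨hJe, hJ⟩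
        rw [hd, conv1 c J]
        exact congrFun hc ⟨J, hJs⟩
    funext I
    have := hkey I I.2
    rw [hd] at this
    simp only [dif_pos I.2] at this
    exact this
  have hLsurj : Function.Surjective L := LinearMap.injective_iff_surjective.mp hLinj
  obtain ⟨c₀, hc₀⟩ := hLsurj (fun J => f (J : Finset ℕ))
  refine ⟨fun I => if h : I ∈ s then c₀ ⟨I, h⟩ else 0, ⟨fun I hI => dif_neg hI, ?_⟩, ?_⟩
  · intro J hJ
    by_cases hJe : J = ∅
    · subst hJe
      rw [hf]
      symm
      apply Finset.sum_eq_zero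
      intro I _
      rw [srank_empty, Nat.cast_zero, mul_zero]
    · have hJs : J ∈ s := by
        rw [hs, Finset.mem_erase]
        exact ⟨hJe, Finset.mem_powerset.mpr hJ⟩
      rw [conv1 c₀ J]
      exact (congrFun hc₀ ⟨J, hJs⟩).symm
  · rintro c' ⟨hvan, heq⟩
    funext I
    by_cases hI : I ∈ s
    · have hdiff : ∀ I ∈ s, (c' I - (if h : I ∈ s then c₀ ⟨I, h⟩ else 0)) = 0 := by
        apply key_indep n
        intro J hJ
        have h1 : ∑ I ∈ s, (c' I - (if h : I ∈ s then c₀ ⟨I, h⟩ else 0)) * (schubertRank n I J : ℝ)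
            = ∑ I ∈ s, c' I * (schubertRank n I J : ℝ)
              - ∑ I ∈ s, (if h : I ∈ s then c₀ ⟨I, h⟩ else 0) * (schubertRank n I J : ℝ) := by
          rw [← Finset.sum_sub_distrib]
          apply Finset.sum_congr rfl
          intro I _
          ring
        rw [h1, ← heq J (Finset.mem_powerset.mp hJ)]
        by_cases hJe : J = ∅
        · subst hJe
          have : ∑ I ∈ s, (if h : I ∈ s then c₀ ⟨I, h⟩ else 0) * (schubertRank n I ∅ : ℝ) = 0 := by
            apply Finset.sum_eq_zero
            intro I _
            rw [srank_empty, Nat.cast_zero, mul_zero]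
          rw [this, hf, sub_zero]
        · have hJs : J ∈ s := by
            rw [hs, Finset.mem_erase]
            exact ⟨hJe, hJ⟩
          rw [conv1 c₀ J]
          have h2 : (∑ I : { x // x ∈ s }, c₀ I * (schubertRank n (I : Finset ℕ) J : ℝ)) = f J :=
            congrFun hc₀ ⟨J, hJs⟩
          rw [h2, sub_self]
      have := hdiff I hI
      rw [dif_pos hI] at this ⊢
      linarith [this]
    · rw [dif_neg hI, hvan I hI]
end

section
/- Let P ⊆ ℝ^n be a generalized permutahedron defined by a submodular function z with z(∅) = 0. Then P is a Schubitope, i.e., P equals a finite Minkowski sum P(SM_n(I_1)) + … + P(SM_n(I_k)) of Schubert matroid polytopes with each I_j ⊆ [n] nonempty, if and only if z is a ℤ≥0-linear combination of rank functions r_{SM_n(I)} of Schubert matroids (I nonempty). -/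
open MvPolynomial

noncomputable section
namespace SP

variable {n : ℕ}

def cnt (t : ℕ) (S : Finset ℕ) : ℕ := (S.filter (· ≤ t)).card
def cntG (t : ℕ) (S : Finset ℕ) : ℕ := (S.filter (fun x => t < x)).card


/-- number of elements of `S` that are `≤ t`. -/
lemma cnt_eq_positions (t : ℕ) (S : Finset ℕ) :
    cnt t S = ((Finset.range S.card).filter
      (fun m => (S.sort (· ≤ ·)).getD m 0 ≤ t)).card := by
  classical
  set L := S.sort (· ≤ ·) with hL
  have hlen : L.length = S.card := Finset.length_sort _
  refine Finset.card_bij (fun x hx => L.idxOf x) ?_ ?_ ?_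
  · intro x hx
    simp only [Finset.mem_filter, cnt] at hx ⊢
    have hmem : x ∈ L := by rw [hL, Finset.mem_sort]; exact hx.1
    have hidx : L.idxOf x < L.length := List.idxOf_lt_length_iff.2 hmem
    refine ⟨Finset.mem_range.2 (hlen ▸ hidx), ?_⟩
    rw [List.getD_eq_getElem _ _ (hlen ▸ hidx : L.idxOf x < L.length)]
    rw [List.getElem_idxOf hidx]
    exact hx.2
  · intro x hx y hy hxy
    have hx' : x ∈ L := by
      rw [hL, Finset.mem_sort]; exact (Finset.mem_filter.1 hx).1
    have hy' : y ∈ L := by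
      rw [hL, Finset.mem_sort]; exact (Finset.mem_filter.1 hy).1
    have h1 := List.idxOf_get (l := L) (a := x) (List.idxOf_lt_length_iff.2 hx')
    have h2 := List.idxOf_get (l := L) (a := y) (List.idxOf_lt_length_iff.2 hy')
    rw [← h1, ← h2]
    congr 1
    exact Fin.ext hxy
  · intro m hm
    simp only [Finset.mem_filter, Finset.mem_range] at hm
    have hmlt : m < L.length := hlen ▸ hm.1
    refine ⟨L.get ⟨m, hmlt⟩, ?_, ?_⟩
    · simp only [Finset.mem_filter, cnt]
      constructor
      · have h3 : L.get ⟨m, hmlt⟩ ∈ L := List.get_mem L ⟨m, hmlt⟩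
        exact (Finset.mem_sort (α := ℕ) (· ≤ ·)).1 h3
      · have := hm.2
        rwa [List.getD_eq_getElem _ _ hmlt] at this
    · exact List.get_idxOf (Finset.sort_nodup _ _) ⟨m, hmlt⟩

lemma galeLE_iff {B I : Finset ℕ} :
    galeLE B I ↔ B.card = I.card ∧ ∀ t, cnt t I ≤ cnt t B := by
  classical
  constructor
  · rintro ⟨hcard, h⟩
    refine ⟨hcard, fun t => ?_⟩
    rw [cnt_eq_positions, cnt_eq_positions, ← hcard]
    apply Finset.card_le_card
    intro m hm
    simp only [Finset.mem_filter, Finset.mem_range] at hm ⊢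
    exact ⟨hm.1, le_trans (h m hm.1) hm.2⟩
  · rintro ⟨hcard, h⟩
    refine ⟨hcard, fun m hm => ?_⟩
    set u := B.sort (· ≤ ·)
    set v := I.sort (· ≤ ·)
    have hul : u.length = B.card := Finset.length_sort _
    have hvl : v.length = I.card := Finset.length_sort _
    by_contra hlt
    push_neg at hlt
    set t := v.getD m 0 with ht
    -- positions of v that are ≤ t include 0..m
    have h1 : m + 1 ≤ cnt t I := by
      rw [cnt_eq_positions]
      have : Finset.range (m+1) ⊆ (Finset.range I.card).filter
          (fun k => v.getD k 0 ≤ t) := by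
        intro k hk
        rw [Finset.mem_range] at hk
        have hkm : k ≤ m := Nat.lt_succ_iff.1 hk
        have hkI : k < I.card := lt_of_le_of_lt hkm (hcard ▸ hm)
        refine Finset.mem_filter.2 ⟨Finset.mem_range.2 hkI, ?_⟩
        have hmv : m < v.length := hvl ▸ (hcard ▸ hm)
        have hkv : k < v.length := hvl ▸ hkI
        rw [List.getD_eq_getElem _ _ hkv, ht, List.getD_eq_getElem _ _ hmv]
        exact List.Pairwise.rel_get_of_le (Finset.pairwise_sort _ _) (by exact hkm)
      calc m + 1 = (Finset.range (m+1)).card := (Finset.card_range _).symm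
        _ ≤ _ := Finset.card_le_card this
    have h2 : cnt t B ≤ m := by
      rw [cnt_eq_positions]
      have : (Finset.range B.card).filter (fun k => u.getD k 0 ≤ t) ⊆
          Finset.range m := by
        intro k hk
        simp only [Finset.mem_filter, Finset.mem_range] at hk ⊢
        by_contra hge
        push_neg at hge
        have hku : k < u.length := hul ▸ hk.1
        have hmu : m < u.length := hul ▸ hm
        have : u.getD m 0 ≤ u.getD k 0 := by
          rw [List.getD_eq_getElem _ _ hku, List.getD_eq_getElem _ _ hmu]
          exact List.Pairwise.rel_get_of_le (Finset.pairwise_sort _ _) (by exact hge)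
        exact absurd (le_trans this hk.2) (not_le.2 hlt)
      calc _ ≤ (Finset.range m).card := Finset.card_le_card this
        _ = m := Finset.card_range _
    have := le_trans h1 (h t)
    omega




lemma cnt_add_cntG (t : ℕ) (S : Finset ℕ) : cnt t S + cntG t S = S.card := by
  classical
  have h := Finset.card_filter_add_card_filter_not (s := S) (p := fun x => x ≤ t)
  have h2 : S.filter (fun x => t < x) = S.filter (fun x => ¬ x ≤ t) := by
    apply Finset.filter_congr; intro x _; simp [not_le]
  unfold cnt cntG
  rw [h2, ← h]

lemma cnt_mono {t t' : ℕ} (h : t ≤ t') (S : Finset ℕ) : cnt t S ≤ cnt t' S :=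
  Finset.card_le_card (Finset.monotone_filter_right _ (by intro x hx; omega))

lemma cnt_le_card (t : ℕ) (S : Finset ℕ) : cnt t S ≤ S.card :=
  Finset.card_le_card (Finset.filter_subset _ _)

lemma cnt_union_disjoint {S T : Finset ℕ} (h : Disjoint S T) (t : ℕ) :
    cnt t (S ∪ T) = cnt t S + cnt t T := by
  classical
  unfold cnt
  rw [Finset.filter_union, Finset.card_union_of_disjoint]
  exact Finset.disjoint_filter_filter h

lemma cnt_insert {a : ℕ} {S : Finset ℕ} (h : a ∉ S) (t : ℕ) :
    cnt t (insert a S) = cnt t S + (if a ≤ t then 1 else 0) := by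
  classical
  unfold cnt
  rw [Finset.filter_insert]
  split
  · rw [Finset.card_insert_of_notMem (fun hc => h (Finset.mem_of_mem_filter _ hc))]
  · simp

lemma cnt_erase {a : ℕ} {S : Finset ℕ} (h : a ∈ S) (t : ℕ) :
    cnt t S = cnt t (S.erase a) + (if a ≤ t then 1 else 0) := by
  classical
  have h1 : S = insert a (S.erase a) := (Finset.insert_erase h).symm
  conv_lhs => rw [h1]
  rw [cnt_insert (Finset.notMem_erase _ _)]

lemma cntG_erase {a : ℕ} {S : Finset ℕ} (h : a ∈ S) (t : ℕ) :
    cntG t S = cntG t (S.erase a) + (if t < a then 1 else 0) := by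
  classical
  have h1 := cnt_add_cntG t S
  have h2 := cnt_add_cntG t (S.erase a)
  have h3 := cnt_erase h t
  have h4 : S.card = (S.erase a).card + 1 := by
    rw [Finset.card_erase_of_mem h]
    have : 1 ≤ S.card := Finset.card_pos.2 ⟨a, h⟩
    omega
  by_cases hat : a ≤ t <;> simp [hat, not_lt.2, lt_iff_not_ge] at * <;> omega

-- basics about schubertRank
lemma le_schubertRank {n : ℕ} {I J B : Finset ℕ} (hB : B ⊆ Finset.Icc 1 n)
    (hg : galeLE B I) : (J ∩ B).card ≤ schubertRank n I J := by
  classical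
  unfold schubertRank
  have hmem : B ∈ (Finset.Icc 1 n).powerset.filter fun B => galeLE B I := by
    simp only [Finset.mem_filter, Finset.mem_powerset]
    exact ⟨hB, hg⟩
  exact Finset.le_sup (f := fun B => (J ∩ B).card) hmem

lemma schubertRank_le {n : ℕ} {I J : Finset ℕ} {m : ℕ}
    (h : ∀ B, B ⊆ Finset.Icc 1 n → galeLE B I → (J ∩ B).card ≤ m) :
    schubertRank n I J ≤ m := by
  classical
  unfold schubertRank
  apply Finset.sup_le
  intro B hB
  simp only [Finset.mem_filter, Finset.mem_powerset] at hB
  exact h B hB.1 hB.2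

lemma galeLE_refl (I : Finset ℕ) : galeLE I I := ⟨rfl, fun _ _ => le_refl _⟩

lemma exists_basis_rank {n : ℕ} {I J : Finset ℕ} (hI : I ⊆ Finset.Icc 1 n) :
    ∃ B, B ⊆ Finset.Icc 1 n ∧ galeLE B I ∧ (J ∩ B).card = schubertRank n I J := by
  classical
  have hne : ((Finset.Icc 1 n).powerset.filter fun B => galeLE B I).Nonempty :=
    ⟨I, by simp only [Finset.mem_filter, Finset.mem_powerset]; exact ⟨hI, galeLE_refl I⟩⟩
  obtain ⟨B, hB, hEq⟩ := Finset.exists_mem_eq_sup _ hne (fun B => (J ∩ B).card)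
  simp only [Finset.mem_filter, Finset.mem_powerset] at hB
  exact ⟨B, hB.1, hB.2, by rw [schubertRank]; exact hEq.symm⟩

-- easy direction of min-max
lemma schubertRank_le_form {n : ℕ} {I J : Finset ℕ} (hI : I ⊆ Finset.Icc 1 n) (t : ℕ) :
    schubertRank n I J ≤ cnt t J + cntG t I := by
  classical
  apply schubertRank_le
  intro B _ hg
  rw [galeLE_iff] at hg
  have h1 : (J ∩ B).card = cnt t (J ∩ B) + cntG t (J ∩ B) := (cnt_add_cntG t _).symm
  have h2 : cnt t (J ∩ B) ≤ cnt t J :=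
    Finset.card_le_card (Finset.filter_subset_filter _ Finset.inter_subset_left)
  have h3 : cntG t (J ∩ B) ≤ cntG t B :=
    Finset.card_le_card (Finset.filter_subset_filter _ Finset.inter_subset_right)
  have h4 : cntG t B ≤ cntG t I := by
    have hb := cnt_add_cntG t B
    have hi := cnt_add_cntG t I
    have := hg.2 t
    omega
  omega




lemma exists_t_minform {n : ℕ} : ∀ k (I J : Finset ℕ), I.card = k →
    I ⊆ Finset.Icc 1 n → J ⊆ Finset.Icc 1 n →
    ∃ t ≤ n, cnt t J + cntG t I ≤ schubertRank n I J := by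
  classical
  intro k
  induction k with
  | zero =>
    intro I J hc hI hJ
    refine ⟨0, Nat.zero_le n, ?_⟩
    have hI0 : I = ∅ := Finset.card_eq_zero.1 hc
    have h1 : cnt 0 J = 0 := by
      unfold cnt
      rw [Finset.card_eq_zero]
      apply Finset.filter_eq_empty_iff.2
      intro x hx
      have := Finset.mem_Icc.1 (hJ hx)
      omega
    have h2 : cntG 0 I = 0 := by simp [hI0, cntG]
    simp [h1, h2]
  | succ k ih =>
    intro I J hc hI hJ
    have hne : I.Nonempty := Finset.card_pos.1 (by omega)
    set s := I.max' hne with hs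
    have hsI : s ∈ I := I.max'_mem hne
    have hs_mem := Finset.mem_Icc.1 (hI hsI)
    have hIs : ∀ x ∈ I, x ≤ s := fun x hx => I.le_max' x hx
    by_cases hA : (J.filter (· ≤ s)) = ∅
    · refine ⟨s, hs_mem.2, ?_⟩
      have h1 : cnt s J = 0 := by unfold cnt; rw [hA]; rfl
      have h2 : cntG s I = 0 := by
        unfold cntG
        rw [Finset.card_eq_zero]
        apply Finset.filter_eq_empty_iff.2
        intro x hx
        exact not_lt.2 (hIs x hx)
      simp [h1, h2]
    · have hAne : (J.filter (· ≤ s)).Nonempty := Finset.nonempty_iff_ne_empty.2 hA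
      set j := (J.filter (· ≤ s)).max' hAne with hj
      have hjmem := Finset.mem_filter.1 ((J.filter (· ≤ s)).max'_mem hAne)
      have hjJ : j ∈ J := hjmem.1
      have hjs : j ≤ s := hjmem.2
      have hjmax : ∀ x ∈ J, x ≤ s → x ≤ j := fun x hx hxs =>
        (J.filter (· ≤ s)).le_max' x (Finset.mem_filter.2 ⟨hx, hxs⟩)
      set I' := I.erase s with hI'
      set J' := J.erase j with hJ'
      have hI'c : I'.card = k := by
        rw [hI', Finset.card_erase_of_mem hsI]; omega
      have hI'sub : I' ⊆ Finset.Icc 1 n := fun x hx => hI (Finset.mem_of_mem_erase hx)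
      have hJ'sub : J' ⊆ Finset.Icc 1 n := fun x hx => hJ (Finset.mem_of_mem_erase hx)
      obtain ⟨t', ht'n, ht'⟩ := ih I' J' hI'c hI'sub hJ'sub
      -- construct a basis B for I with (J ∩ B).card ≥ R(I',J') + 1
      obtain ⟨B', hB'sub, hB'g, hB'eq⟩ := exists_basis_rank (J := J') hI'sub
      have hgc := galeLE_iff.1 hB'g
      have hIcard : I.card = I'.card + 1 := by rw [hI'c]; omega
      have hstep : schubertRank n I' J' + 1 ≤ schubertRank n I J := by
        by_cases hjB : j ∈ B'
        · -- insert some x ≤ s, x ∉ B'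
          have hIccs : ¬ (Finset.Icc 1 s ⊆ B') := by
            intro hcon
            have h1 : (Finset.Icc 1 s).card ≤ B'.card := Finset.card_le_card hcon
            have h2 : (Finset.Icc 1 s).card = s := by rw [Nat.card_Icc]; omega
            have h3 : I ⊆ Finset.Icc 1 s := by
              intro x hx
              exact Finset.mem_Icc.2 ⟨(Finset.mem_Icc.1 (hI hx)).1, hIs x hx⟩
            have h4 : I.card ≤ s := h2 ▸ Finset.card_le_card h3
            omega
          obtain ⟨x, hxIcc, hxB'⟩ := Finset.not_subset.1 hIccs
          have hxs := (Finset.mem_Icc.1 hxIcc).2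
          set B := insert x B' with hB
          have hBg : galeLE B I := by
            rw [galeLE_iff]
            constructor
            · rw [hB, Finset.card_insert_of_notMem hxB', hgc.1, hIcard]
            · intro t
              rw [hB, cnt_insert hxB' t, cnt_erase hsI t, ← hI']
              have := hgc.2 t
              have hxst : s ≤ t → x ≤ t := fun h => le_trans hxs h
              by_cases hst : s ≤ t <;> by_cases hxt : x ≤ t <;>
                simp [hst, hxt] at * <;> omega
          have hBsub : B ⊆ Finset.Icc 1 n := by
            rw [hB]
            intro y hy
            rcases Finset.mem_insert.1 hy with h | h
            · subst h; exact Finset.mem_Icc.2 ⟨(Finset.mem_Icc.1 hxIcc).1,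
                le_trans hxs hs_mem.2⟩
            · exact hB'sub h
          have hsub2 : insert j (J' ∩ B') ⊆ J ∩ B := by
            intro y hy
            rcases Finset.mem_insert.1 hy with h | h
            · subst h
              exact Finset.mem_inter.2 ⟨hjJ, Finset.mem_insert_of_mem hjB⟩
            · have := Finset.mem_inter.1 h
              exact Finset.mem_inter.2 ⟨Finset.mem_of_mem_erase this.1,
                Finset.mem_insert_of_mem this.2⟩
          have hjnot : j ∉ J' ∩ B' := by
            intro hcon
            exact Finset.notMem_erase j J (Finset.mem_inter.1 hcon).1
          calc schubertRank n I' J' + 1 = (J' ∩ B').card + 1 := by rw [hB'eq]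
            _ = (insert j (J' ∩ B')).card := (Finset.card_insert_of_notMem hjnot).symm
            _ ≤ (J ∩ B).card := Finset.card_le_card hsub2
            _ ≤ schubertRank n I J := le_schubertRank hBsub hBg
        · -- insert j itself
          set B := insert j B' with hB
          have hBg : galeLE B I := by
            rw [galeLE_iff]
            constructor
            · rw [hB, Finset.card_insert_of_notMem hjB, hgc.1, hIcard]
            · intro t
              rw [hB, cnt_insert hjB t, cnt_erase hsI t, ← hI']
              have := hgc.2 t
              have hxst : s ≤ t → j ≤ t := fun h => le_trans hjs h
              by_cases hst : s ≤ t <;> by_cases hxt : j ≤ t <;>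
                simp [hst, hxt] at * <;> omega
          have hBsub : B ⊆ Finset.Icc 1 n := by
            rw [hB]
            intro y hy
            rcases Finset.mem_insert.1 hy with h | h
            · subst h; exact hJ hjJ
            · exact hB'sub h
          have hsub2 : insert j (J' ∩ B') ⊆ J ∩ B := by
            intro y hy
            rcases Finset.mem_insert.1 hy with h | h
            · subst h
              exact Finset.mem_inter.2 ⟨hjJ, Finset.mem_insert_self _ _⟩
            · have := Finset.mem_inter.1 h
              exact Finset.mem_inter.2 ⟨Finset.mem_of_mem_erase this.1,
                Finset.mem_insert_of_mem this.2⟩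
          have hjnot : j ∉ J' ∩ B' := by
            intro hcon
            exact Finset.notMem_erase j J (Finset.mem_inter.1 hcon).1
          calc schubertRank n I' J' + 1 = (J' ∩ B').card + 1 := by rw [hB'eq]
            _ = (insert j (J' ∩ B')).card := (Finset.card_insert_of_notMem hjnot).symm
            _ ≤ (J ∩ B).card := Finset.card_le_card hsub2
            _ ≤ schubertRank n I J := le_schubertRank hBsub hBg
      -- now choose the final threshold t
      by_cases hcase : t' < j ∨ s ≤ t'
      · refine ⟨t', ht'n, ?_⟩
        have e1 : cnt t' J = cnt t' J' + (if j ≤ t' then 1 else 0) := cnt_erase hjJ t'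
        have e2 : cntG t' I = cntG t' I' + (if t' < s then 1 else 0) := cntG_erase hsI t'
        have hbound : (if j ≤ t' then 1 else 0) + (if t' < s then 1 else 0) ≤ 1 := by
          rcases hcase with h | h
          · rw [if_neg (not_le.2 h)]; split <;> omega
          · rw [if_neg (not_lt.2 h)]; split <;> omega
        omega
      · push_neg at hcase
        obtain ⟨hjt', ht's⟩ := hcase
        refine ⟨s, hs_mem.2, ?_⟩
        have e2 : cntG s I = 0 := by
          unfold cntG
          rw [Finset.card_eq_zero]
          apply Finset.filter_eq_empty_iff.2
          intro x hx
          exact not_lt.2 (hIs x hx)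
        have e1 : cnt s J = cnt s J' + 1 := by
          have h5 := cnt_erase hjJ s
          rw [if_pos hjs, ← hJ'] at h5
          omega
        have e3 : cnt s J' = cnt t' J' := by
          have hle : cnt t' J' ≤ cnt s J' := cnt_mono (le_of_lt ht's) J'
          have hge : cnt s J' ≤ cnt t' J' := by
            unfold cnt
            apply Finset.card_le_card
            intro y hy
            have hy' := Finset.mem_filter.1 hy
            refine Finset.mem_filter.2 ⟨hy'.1, ?_⟩
            by_contra hyt
            push_neg at hyt
            have hyJ : y ∈ J := Finset.mem_of_mem_erase hy'.1
            have hyj : y ≤ j := hjmax y hyJ hy'.2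
            have : y ≠ j := Finset.ne_of_mem_erase hy'.1
            omega
          omega
        omega

-- submodularity
lemma form_helper {n : ℕ} {I : Finset ℕ} (hI : I ⊆ Finset.Icc 1 n)
    (A B : Finset ℕ) (tA tB : ℕ) (hAB : tA ≤ tB)
    (hA : cnt tA A + cntG tA I ≤ schubertRank n I A)
    (hB : cnt tB B + cntG tB I ≤ schubertRank n I B) :
    schubertRank n I (A ∪ B) + schubertRank n I (A ∩ B) ≤
      schubertRank n I A + schubertRank n I B := by
  classical
  have h1 : schubertRank n I (A ∪ B) ≤ cnt tA (A ∪ B) + cntG tA I :=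
    schubertRank_le_form hI tA
  have h2 : schubertRank n I (A ∩ B) ≤ cnt tB (A ∩ B) + cntG tB I :=
    schubertRank_le_form hI tB
  have hd1 : Disjoint A (B \ A) := Finset.disjoint_sdiff
  have hu : A ∪ B = A ∪ (B \ A) := by rw [Finset.union_sdiff_self_eq_union]
  have hb : B = (A ∩ B) ∪ (B \ A) := by
    ext x; simp only [Finset.mem_union, Finset.mem_inter, Finset.mem_sdiff]; tauto
  have hd2 : Disjoint (A ∩ B) (B \ A) := by
    apply Finset.disjoint_left.2
    intro x hx hx'
    exact (Finset.mem_sdiff.1 hx').2 (Finset.mem_inter.1 hx).1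
  have e1 : cnt tA (A ∪ B) = cnt tA A + cnt tA (B \ A) := by
    rw [hu]; exact cnt_union_disjoint hd1 tA
  have e2 : cnt tB B = cnt tB (A ∩ B) + cnt tB (B \ A) := by
    conv_lhs => rw [hb]
    exact cnt_union_disjoint hd2 tB
  have e3 : cnt tA (B \ A) ≤ cnt tB (B \ A) := cnt_mono hAB _
  omega

lemma schubertRank_submod {n : ℕ} {I A B : Finset ℕ} (hI : I ⊆ Finset.Icc 1 n)
    (hA : A ⊆ Finset.Icc 1 n) (hB : B ⊆ Finset.Icc 1 n) :
    schubertRank n I (A ∪ B) + schubertRank n I (A ∩ B) ≤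
      schubertRank n I A + schubertRank n I B := by
  obtain ⟨tA, _, htA⟩ := exists_t_minform I.card I A rfl hI hA
  obtain ⟨tB, _, htB⟩ := exists_t_minform I.card I B rfl hI hB
  rcases le_total tA tB with h | h
  · exact form_helper hI A B tA tB h htA htB
  · have := form_helper hI B A tB tA h htB htA
    rw [Finset.union_comm, Finset.inter_comm] at this
    omega



variable {n : ℕ}

/-- prefix set of a chain list -/
def Sk (L : List (Fin n)) (k : ℕ) : Finset (Fin n) := (L.take k).toFinset

/-- a good chain: a list enumerating all of `Fin n` -/
def Chain (n : ℕ) (L : List (Fin n)) : Prop := L.Nodup ∧ L.length = n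

lemma Chain.mem {L : List (Fin n)} (hL : Chain n L) (i : Fin n) : i ∈ L := by
  have h1 : L.toFinset.card = n := by
    rw [List.toFinset_card_of_nodup hL.1, hL.2]
  have h2 : L.toFinset = Finset.univ := Finset.eq_univ_of_card _ (by simp [h1])
  rw [← List.mem_toFinset, h2]
  exact Finset.mem_univ i

lemma Chain.idx_lt {L : List (Fin n)} (hL : Chain n L) (i : Fin n) :
    L.idxOf i < n := by
  have h := List.idxOf_lt_length_iff.2 (hL.mem i)
  have h2 := hL.2
  omega

lemma mem_Sk {L : List (Fin n)} (hL : Chain n L) {i : Fin n} {k : ℕ} :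
    i ∈ Sk L k ↔ L.idxOf i < k := by
  constructor
  · intro h
    rw [Sk, List.mem_toFinset, List.mem_iff_getElem] at h
    obtain ⟨m, hm, hEq⟩ := h
    have hmk : m < k := by
      have := hm; simp only [List.length_take] at this; omega
    have hml : m < L.length := by
      have := hm; simp only [List.length_take] at this; omega
    have : L[m] = i := by rw [← List.getElem_take (xs := L) (j := k) (h := hm)]; exact hEq
    rw [← this, List.Nodup.idxOf_getElem hL.1 m hml]
    exact hmk
  · intro h
    rw [Sk, List.mem_toFinset, List.mem_iff_getElem]
    have hml : L.idxOf i < L.length := List.idxOf_lt_length_iff.2 (hL.mem i)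
    have hlt : L.idxOf i < (L.take k).length := by
      simp only [List.length_take]; omega
    exact ⟨L.idxOf i, hlt, by
      rw [List.getElem_take (xs := L) (j := k)]
      exact List.getElem_idxOf hml⟩

lemma Sk_zero (L : List (Fin n)) : Sk L 0 = ∅ := by simp [Sk]

lemma Sk_univ {L : List (Fin n)} (hL : Chain n L) : Sk L n = Finset.univ := by
  apply Finset.eq_univ_of_forall
  intro i
  exact (mem_Sk hL).2 (hL.idx_lt i)

lemma getElem_not_mem_Sk {L : List (Fin n)} (hL : Chain n L) {k : ℕ} (hk : k < L.length) :
    L[k] ∉ Sk L k := by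
  rw [mem_Sk hL, List.Nodup.idxOf_getElem hL.1 k hk]
  omega

lemma Sk_succ {L : List (Fin n)} (hL : Chain n L) {k : ℕ} (hk : k < L.length) :
    Sk L (k + 1) = insert (L[k]) (Sk L k) := by
  ext i
  rw [mem_Sk hL, Finset.mem_insert, mem_Sk hL]
  constructor
  · intro h
    rcases Nat.lt_succ_iff_lt_or_eq.1 h with h | h
    · exact Or.inr h
    · left
      subst h
      exact (List.getElem_idxOf (List.idxOf_lt_length_iff.2 (hL.mem i))).symm
  · intro h
    rcases h with h | h
    · subst h
      rw [List.Nodup.idxOf_getElem hL.1 k hk]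
      omega
    · omega

lemma Sk_mono {L : List (Fin n)} (hL : Chain n L) {k k' : ℕ} (h : k ≤ k') :
    Sk L k ⊆ Sk L k' := fun i hi => (mem_Sk hL).2 (lt_of_lt_of_le ((mem_Sk hL).1 hi) h)

/-- the greedy point of a submodular function along a chain -/
def gpt (z : Finset (Fin n) → ℝ) (L : List (Fin n)) : Fin n → ℝ :=
  fun i => z (Sk L (L.idxOf i + 1)) - z (Sk L (L.idxOf i))

lemma gpt_sum_Sk {z : Finset (Fin n) → ℝ} (hz0 : z ∅ = 0) {L : List (Fin n)}
    (hL : Chain n L) : ∀ k, k ≤ n → ∑ i ∈ Sk L k, gpt z L i = z (Sk L k) := by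
  intro k
  induction k with
  | zero => intro _; simp [Sk_zero, hz0]
  | succ k ih =>
    intro hk
    have hln := hL.2
    have hkl : k < L.length := by omega
    rw [Sk_succ hL hkl, Finset.sum_insert (getElem_not_mem_Sk hL hkl),
      ih (by omega), gpt, List.Nodup.idxOf_getElem hL.1 k hkl, ← Sk_succ hL hkl]
    ring

lemma gpt_sum_le {z : Finset (Fin n) → ℝ} (hz0 : z ∅ = 0)
    (hsub : ∀ A B : Finset (Fin n), z (A ∪ B) + z (A ∩ B) ≤ z A + z B)
    {L : List (Fin n)} (hL : Chain n L) :
    ∀ (A : Finset (Fin n)), ∑ i ∈ A, gpt z L i ≤ z A := by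
  have key : ∀ (m : ℕ) (A : Finset (Fin n)), A.card = m → ∑ i ∈ A, gpt z L i ≤ z A := by
    intro m
    induction m with
    | zero =>
      intro A hA
      rw [Finset.card_eq_zero.1 hA]
      simp [hz0]
    | succ m ih =>
      intro A hA
      have hne : A.Nonempty := Finset.card_pos.1 (by omega)
      obtain ⟨i, hiA, hmax⟩ := Finset.exists_max_image A (fun a => L.idxOf a) hne
      set p := L.idxOf i with hp
      have hpl : p < L.length := List.idxOf_lt_length_iff.2 (hL.mem i)
      have hAsub : A ⊆ Sk L (p + 1) := by
        intro a ha
        exact (mem_Sk hL).2 (by have := hmax a ha; omega)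
      have hinter : A ∩ Sk L p = A.erase i := by
        ext a
        simp only [Finset.mem_inter, Finset.mem_erase, mem_Sk hL]
        constructor
        · intro ⟨h1, h2⟩
          refine ⟨?_, h1⟩
          intro hcon; subst hcon; omega
        · intro ⟨h1, h2⟩
          refine ⟨h2, ?_⟩
          have hle := hmax a h2
          have : L.idxOf a ≠ p := by
            intro hcon
            apply h1
            exact (List.idxOf_inj (hL.mem a)).1 (by rw [hcon, hp])
          omega
      have hunion : A ∪ Sk L p = Sk L (p + 1) := by
        apply Finset.Subset.antisymm
        · apply Finset.union_subset hAsub (Sk_mono hL (by omega))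
        · rw [Sk_succ hL hpl]
          intro a ha
          rcases Finset.mem_insert.1 ha with h | h
          · subst h
            apply Finset.mem_union_left
            have : L[p] = i := List.getElem_idxOf (hp ▸ hpl)
            rw [this]; exact hiA
          · exact Finset.mem_union_right _ h
      have hsb := hsub A (Sk L p)
      rw [hunion, hinter] at hsb
      have herase : (A.erase i).card = m := by
        rw [Finset.card_erase_of_mem hiA, hA]
        omega
      have ihe := ih (A.erase i) herase
      rw [← Finset.sum_erase_add A _ hiA]
      have hg : gpt z L i = z (Sk L (p + 1)) - z (Sk L p) := rfl
      rw [hg]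
      linarith
  intro A
  exact key A.card A rfl



variable {n : ℕ}

def ca (φ : Fin n → ℝ) (L : List (Fin n)) (k : ℕ) : ℝ :=
  if h : k < L.length then φ (L[k]) else 0

def gval (z : Finset (Fin n) → ℝ) (φ : Fin n → ℝ) (L : List (Fin n)) : ℝ :=
  ∑ k ∈ Finset.range n, (ca φ L k - ca φ L (k + 1)) * z (Sk L (k + 1))

lemma telescope (f : ℕ → ℝ) {m n : ℕ} (h : m ≤ n) :
    ∑ k ∈ Finset.Ico m n, (f k - f (k+1)) = f m - f n := by
  rw [Finset.sum_Ico_eq_sub _ h, Finset.sum_range_sub' f, Finset.sum_range_sub' f]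
  ring

lemma ca_idx (φ : Fin n → ℝ) {L : List (Fin n)} (hL : Chain n L) (i : Fin n) :
    ca φ L (L.idxOf i) = φ i := by
  have h : L.idxOf i < L.length := List.idxOf_lt_length_iff.2 (hL.mem i)
  rw [ca, dif_pos h, List.getElem_idxOf h]

lemma abel_identity (φ : Fin n → ℝ) {L : List (Fin n)} (hL : Chain n L)
    (t : Fin n → ℝ) :
    ∑ i, φ i * t i =
      ∑ k ∈ Finset.range n, (ca φ L k - ca φ L (k + 1)) * (∑ i ∈ Sk L (k + 1), t i) := by
  classical
  have hlen := hL.2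
  have h1 : ∀ k : ℕ, ∑ i ∈ Sk L (k+1), t i =
      ∑ i : Fin n, if L.idxOf i < k + 1 then t i else 0 := by
    intro k
    rw [eq_comm]
    calc (∑ i : Fin n, if L.idxOf i < k + 1 then t i else 0)
        = ∑ i : Fin n, if i ∈ Sk L (k+1) then t i else 0 := by
          apply Finset.sum_congr rfl
          intro i _
          congr 1
          simp only [eq_iff_iff]
          exact (mem_Sk hL).symm
      _ = ∑ i ∈ Finset.univ ∩ Sk L (k+1), t i := Finset.sum_ite_mem _ _ _
      _ = ∑ i ∈ Sk L (k+1), t i := by rw [Finset.univ_inter]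
  simp only [h1, Finset.mul_sum]
  rw [Finset.sum_comm]
  apply Finset.sum_congr rfl
  intro i _
  have h2 : ∀ k, ((ca φ L k - ca φ L (k + 1)) * if L.idxOf i < k + 1 then t i else 0)
      = if L.idxOf i ≤ k then (ca φ L k - ca φ L (k + 1)) * t i else 0 := by
    intro k
    by_cases h : L.idxOf i ≤ k
    · rw [if_pos h, if_pos (by omega)]
    · rw [if_neg h, if_neg (by omega), mul_zero]
  calc φ i * t i = (ca φ L (L.idxOf i) - ca φ L n) * t i := by
        rw [ca_idx φ hL i, ca, dif_neg (by omega)]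
        ring
    _ = (∑ k ∈ Finset.Ico (L.idxOf i) n, (ca φ L k - ca φ L (k+1))) * t i := by
        rw [telescope (ca φ L) (le_of_lt (hL.idx_lt i))]
    _ = ∑ k ∈ Finset.Ico (L.idxOf i) n, (ca φ L k - ca φ L (k+1)) * t i := by
        rw [Finset.sum_mul]
    _ = ∑ k ∈ (Finset.range n).filter (fun k => L.idxOf i ≤ k),
          (ca φ L k - ca φ L (k+1)) * t i := by
        congr 1
        ext k
        simp only [Finset.mem_Ico, Finset.mem_filter, Finset.mem_range]
        omega
    _ = ∑ k ∈ Finset.range n, if L.idxOf i ≤ k then (ca φ L k - ca φ L (k+1)) * t i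
          else 0 := (Finset.sum_filter _ _)
    _ = _ := by
        apply Finset.sum_congr rfl
        intro k _
        rw [h2 k]

lemma abel_bound (hn : 1 ≤ n) (φ : Fin n → ℝ) {L : List (Fin n)} (hL : Chain n L)
    (hmono : ∀ k, k + 1 < n → ca φ L (k+1) ≤ ca φ L k)
    (z : Finset (Fin n) → ℝ) (t : Fin n → ℝ)
    (hle : ∀ A : Finset (Fin n), ∑ i ∈ A, t i ≤ z A)
    (heq : ∑ i, t i = z Finset.univ) :
    ∑ i, φ i * t i ≤ gval z φ L := by
  rw [abel_identity φ hL t, gval]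
  obtain ⟨m, rfl⟩ : ∃ m, n = m + 1 := ⟨n - 1, by omega⟩
  rw [Finset.sum_range_succ, Finset.sum_range_succ]
  have hlast : ∑ i ∈ Sk L (m+1), t i = z (Sk L (m+1)) := by
    rw [Sk_univ hL, ← heq]
  rw [hlast]
  have hrest : ∀ k ∈ Finset.range m,
      (ca φ L k - ca φ L (k + 1)) * (∑ i ∈ Sk L (k + 1), t i) ≤
      (ca φ L k - ca φ L (k + 1)) * z (Sk L (k + 1)) := by
    intro k hk
    have hkm := Finset.mem_range.1 hk
    apply mul_le_mul_of_nonneg_left (hle _)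
    have := hmono k (by omega)
    linarith
  have := Finset.sum_le_sum hrest
  linarith



variable {n : ℕ}


-- the Fin n world
def img (A : Finset (Fin n)) : Finset ℕ := A.image (fun i : Fin n => (i : ℕ) + 1)

lemma emb_inj : Function.Injective (fun i : Fin n => (i : ℕ) + 1) := by
  intro i j h
  simp only at h
  exact Fin.ext (by omega)

lemma img_subset_Icc (A : Finset (Fin n)) : img A ⊆ Finset.Icc 1 n := by
  intro x hx
  obtain ⟨i, _, rfl⟩ := Finset.mem_image.1 hx
  exact Finset.mem_Icc.2 ⟨by omega, by omega⟩

lemma img_card (A : Finset (Fin n)) : (img A).card = A.card :=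
  Finset.card_image_of_injective _ emb_inj

lemma mem_img {A : Finset (Fin n)} {i : Fin n} : ((i : ℕ) + 1) ∈ img A ↔ i ∈ A := by
  constructor
  · intro h
    obtain ⟨j, hj, hEq⟩ := Finset.mem_image.1 h
    rwa [emb_inj hEq] at hj
  · intro h
    exact Finset.mem_image_of_mem _ h

lemma img_univ : img (Finset.univ : Finset (Fin n)) = Finset.Icc 1 n := by
  apply Finset.Subset.antisymm (img_subset_Icc _)
  intro x hx
  have hx' := Finset.mem_Icc.1 hx
  have hlt : x - 1 < n := by omega
  have : x = ((⟨x - 1, hlt⟩ : Fin n) : ℕ) + 1 := by simp; omega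
  rw [this]
  exact Finset.mem_image_of_mem _ (Finset.mem_univ _)

lemma img_union (A B : Finset (Fin n)) : img (A ∪ B) = img A ∪ img B :=
  Finset.image_union _ _

lemma img_inter (A B : Finset (Fin n)) : img (A ∩ B) = img A ∩ img B :=
  Finset.image_inter _ _ emb_inj

lemma img_empty : img (∅ : Finset (Fin n)) = ∅ := rfl

def rnk (n : ℕ) (I : Finset ℕ) (A : Finset (Fin n)) : ℕ := schubertRank n I (img A)

lemma schubertRank_mono {I J J' : Finset ℕ} (h : J ⊆ J') :
    schubertRank n I J ≤ schubertRank n I J' := by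
  apply schubertRank_le
  intro B hB hg
  calc (J ∩ B).card ≤ (J' ∩ B).card :=
        Finset.card_le_card (Finset.inter_subset_inter h (Finset.Subset.refl B))
    _ ≤ _ := le_schubertRank hB hg

lemma rnk_empty (I : Finset ℕ) : rnk n I ∅ = 0 := by
  apply Nat.le_antisymm _ (Nat.zero_le _)
  apply schubertRank_le
  intro B _ _
  simp [img_empty]

lemma rnk_le_card (I : Finset ℕ) (A : Finset (Fin n)) : rnk n I A ≤ A.card := by
  rw [← img_card A]
  apply schubertRank_le
  intro B _ _
  exact Finset.card_le_card (Finset.inter_subset_left)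

lemma rnk_mono (I : Finset ℕ) {A B : Finset (Fin n)} (h : A ⊆ B) :
    rnk n I A ≤ rnk n I B :=
  schubertRank_mono (Finset.image_subset_image h)

lemma rnk_insert_le (I : Finset ℕ) (A : Finset (Fin n)) (i : Fin n) :
    rnk n I (insert i A) ≤ rnk n I A + 1 := by
  apply schubertRank_le
  intro B hB hg
  have h1 : img (insert i A) = insert ((i:ℕ)+1) (img A) := Finset.image_insert _ _ _
  have h2 : img (insert i A) ∩ B ⊆ insert ((i:ℕ)+1) (img A ∩ B) := by
    rw [h1]
    intro x hx
    have := Finset.mem_inter.1 hx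
    rcases Finset.mem_insert.1 this.1 with h | h
    · exact Finset.mem_insert.2 (Or.inl h)
    · exact Finset.mem_insert.2 (Or.inr (Finset.mem_inter.2 ⟨h, this.2⟩))
  calc (img (insert i A) ∩ B).card ≤ (insert ((i:ℕ)+1) (img A ∩ B)).card :=
        Finset.card_le_card h2
    _ ≤ (img A ∩ B).card + 1 := Finset.card_insert_le _ _
    _ ≤ rnk n I A + 1 := by
        have h5 := le_schubertRank (J := img A) hB hg
        have h6 : schubertRank n I (img A) = rnk n I A := rfl
        omega

lemma rnk_univ {I : Finset ℕ} (hI : I ⊆ Finset.Icc 1 n) :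
    rnk n I Finset.univ = I.card := by
  apply Nat.le_antisymm
  · apply schubertRank_le
    intro B hB hg
    rw [img_univ, Finset.inter_eq_right.2 hB]
    exact le_of_eq hg.1
  · show I.card ≤ schubertRank n I (img (Finset.univ : Finset (Fin n)))
    have hIsub : I ⊆ img (Finset.univ : Finset (Fin n)) := by rw [img_univ]; exact hI
    have h5 := le_schubertRank (n := n) (J := img (Finset.univ : Finset (Fin n))) hI
      (galeLE_refl I)
    rwa [Finset.inter_eq_right.2 hIsub] at h5

lemma rnk_submod {I : Finset ℕ} (hI : I ⊆ Finset.Icc 1 n) (A B : Finset (Fin n)) :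
    rnk n I (A ∪ B) + rnk n I (A ∩ B) ≤ rnk n I A + rnk n I B := by
  have := schubertRank_submod (n := n) hI (img_subset_Icc A) (img_subset_Icc B)
  rwa [← img_union, ← img_inter] at this

lemma rnk_indep {I : Finset ℕ} (hI : I ⊆ Finset.Icc 1 n) {A : Finset (Fin n)}
    (h : rnk n I A = A.card) (hc : A.card = I.card) : galeLE (img A) I := by
  obtain ⟨B, hBsub, hBg, hBeq⟩ := exists_basis_rank (J := img A) hI
  have h1 : (img A ∩ B).card = (img A).card := by
    rw [hBeq, img_card, ← h]; rfl
  have h2 : img A ⊆ B := by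
    have hsub : img A ∩ B ⊆ img A := Finset.inter_subset_left
    have : img A ∩ B = img A := Finset.eq_of_subset_of_card_le hsub (le_of_eq h1.symm)
    rw [← this]
    exact Finset.inter_subset_right
  have h3 : img A = B := by
    apply Finset.eq_of_subset_of_card_le h2
    rw [img_card, hc, hBg.1]
  rw [h3]
  exact hBg

/-- the greedy basis vertex along a chain -/
theorem exists_schubert_vertex {I : Finset ℕ} (hI : I ⊆ Finset.Icc 1 n)
    (φ : Fin n → ℝ) {L : List (Fin n)} (hL : Chain n L) :
    ∃ B, B ⊆ Finset.Icc 1 n ∧ galeLE B I ∧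
      (∑ i, φ i * (if ((i : ℕ) + 1) ∈ B then (1:ℝ) else 0))
        = gval (fun A => (schubertRank n I (img A) : ℝ)) φ L := by
  classical
  have hlen := hL.2
  set TT : Finset (Fin n) := Finset.univ.filter
    (fun i => rnk n I (Sk L (L.idxOf i)) < rnk n I (Sk L (L.idxOf i + 1))) with hTT
  -- the two inductive facts
  have key : ∀ k, k ≤ n → (TT ∩ Sk L k).card = rnk n I (Sk L k) ∧
      rnk n I (TT ∩ Sk L k) = (TT ∩ Sk L k).card := by
    intro k
    induction k with
    | zero =>
      intro _
      rw [Sk_zero, Finset.inter_empty, Finset.card_empty]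
      exact ⟨(rnk_empty I).symm, rnk_empty I⟩
    | succ k ih =>
      intro hk
      obtain ⟨ih1, ih2⟩ := ih (by omega)
      have hkl : k < L.length := by omega
      set i := L[k] with hi
      have hidx : L.idxOf i = k := List.Nodup.idxOf_getElem hL.1 k hkl
      have hins : Sk L (k+1) = insert i (Sk L k) := Sk_succ hL hkl
      have hnotmem : i ∉ Sk L k := getElem_not_mem_Sk hL hkl
      have hmarg : rnk n I (Sk L (k+1)) ≤ rnk n I (Sk L k) + 1 := by
        rw [hins]; exact rnk_insert_le I _ i
      have hmono' : rnk n I (Sk L k) ≤ rnk n I (Sk L (k+1)) :=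
        rnk_mono I (Sk_mono hL (by omega))
      by_cases hiT : i ∈ TT
      · have hlt : rnk n I (Sk L k) < rnk n I (Sk L (k+1)) := by
          have := (Finset.mem_filter.1 hiT).2
          rwa [hidx] at this
        have hstep : rnk n I (Sk L (k+1)) = rnk n I (Sk L k) + 1 := by omega
        have hset : TT ∩ Sk L (k+1) = insert i (TT ∩ Sk L k) := by
          rw [hins, Finset.inter_insert_of_mem hiT]
        have hinot : i ∉ TT ∩ Sk L k := fun hcon => hnotmem (Finset.mem_inter.1 hcon).2
        have hcard : (TT ∩ Sk L (k+1)).card = (TT ∩ Sk L k).card + 1 := by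
          rw [hset, Finset.card_insert_of_notMem hinot]
        constructor
        · omega
        · -- independence via submodularity
          have hsub := rnk_submod hI (TT ∩ Sk L (k+1)) (Sk L k)
          have hu : TT ∩ Sk L (k+1) ∪ Sk L k = Sk L (k+1) := by
            rw [hset, hins]
            apply Finset.Subset.antisymm
            · intro x hx
              rcases Finset.mem_union.1 hx with h | h
              · rcases Finset.mem_insert.1 h with h | h
                · exact Finset.mem_insert.2 (Or.inl h)
                · exact Finset.mem_insert.2 (Or.inr (Finset.mem_inter.1 h).2)
              · exact Finset.mem_insert.2 (Or.inr h)
            · intro x hx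
              rcases Finset.mem_insert.1 hx with h | h
              · exact Finset.mem_union.2 (Or.inl (Finset.mem_insert.2 (Or.inl h)))
              · exact Finset.mem_union.2 (Or.inr h)
          have hi2 : TT ∩ Sk L (k+1) ∩ Sk L k = TT ∩ Sk L k := by
            rw [hset, Finset.insert_inter_of_notMem hnotmem,
              Finset.inter_assoc, Finset.inter_self]
          rw [hu, hi2] at hsub
          have hle : rnk n I (TT ∩ Sk L (k+1)) ≤ (TT ∩ Sk L (k+1)).card :=
            rnk_le_card I _
          omega
      · have hEq : rnk n I (Sk L (k+1)) = rnk n I (Sk L k) := by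
          have := Finset.mem_filter.not.1 hiT
          simp only [Finset.mem_univ, true_and, hidx] at this
          omega
        have hset : TT ∩ Sk L (k+1) = TT ∩ Sk L k := by
          rw [hins, Finset.inter_insert_of_notMem hiT]
        rw [hset, hEq]
        exact ⟨ih1, ih2⟩
  obtain ⟨k1, k2⟩ := key n (le_refl n)
  rw [Sk_univ hL, Finset.inter_univ] at k1 k2
  have hcardTT : TT.card = I.card := by rw [k1, rnk_univ hI]
  have hbasis : galeLE (img TT) I := rnk_indep hI (k2.trans rfl) hcardTT
  refine ⟨img TT, img_subset_Icc TT, hbasis, ?_⟩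
  have habel := abel_identity φ hL (fun i => if ((i : ℕ) + 1) ∈ img TT then (1:ℝ) else 0)
  rw [habel, gval]
  apply Finset.sum_congr rfl
  intro k hk
  have hkn := Finset.mem_range.1 hk
  congr 1
  -- ∑ over Sk of the indicator = rnk of Sk
  have h1 : ∀ (S : Finset (Fin n)),
      (∑ i ∈ S, (if ((i : ℕ) + 1) ∈ img TT then (1:ℝ) else 0)) = ((S ∩ TT).card : ℝ) := by
    intro S
    have : ∀ i ∈ S, (if ((i : ℕ) + 1) ∈ img TT then (1:ℝ) else 0)
        = (if i ∈ TT then (1:ℝ) else 0) := by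
      intro i _
      congr 1
      simp only [eq_iff_iff]
      exact mem_img
    rw [Finset.sum_congr rfl this, Finset.sum_ite_mem, Finset.sum_const, nsmul_eq_mul,
      mul_one]
  rw [h1]
  have := (key (k+1) (by omega)).1
  rw [Finset.inter_comm] at this
  rw [this]
  rfl


variable {n : ℕ}

/-- a chain whose first `A.card` entries are exactly `A` -/
lemma exists_chain_through (A : Finset (Fin n)) :
    ∃ L : List (Fin n), Chain n L ∧ Sk L A.card = A := by
  classical
  refine ⟨A.sort (· ≤ ·) ++ Aᶜ.sort (· ≤ ·), ⟨?_, ?_⟩, ?_⟩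
  · apply List.Nodup.append (Finset.sort_nodup _ _) (Finset.sort_nodup _ _)
    intro x hx hx'
    have h1 : x ∈ A := (Finset.mem_sort _).1 hx
    have h2 : x ∈ Aᶜ := (Finset.mem_sort _).1 hx'
    exact (Finset.mem_compl.1 h2) h1
  · rw [List.length_append, Finset.length_sort, Finset.length_sort]
    rw [Finset.card_add_card_compl]
    simp
  · have h1 : A.card = (A.sort (· ≤ ·)).length := (Finset.length_sort _).symm
    rw [Sk, h1, List.take_left]
    exact Finset.sort_toFinset _ _

/-- a chain sorted so that `φ` is (weakly) decreasing along it -/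
lemma exists_sorted_chain (φ : Fin n → ℝ) :
    ∃ L : List (Fin n), Chain n L ∧ ∀ k, k + 1 < n → ca φ L (k + 1) ≤ ca φ L k := by
  classical
  set σ := Tuple.sort (fun i => -φ i) with hσ
  refine ⟨(List.finRange n).map σ, ⟨?_, ?_⟩, ?_⟩
  · exact (List.nodup_map_iff σ.injective).2 (List.nodup_finRange n)
  · rw [List.length_map, List.length_finRange]
  · intro k hk
    have hlen : ((List.finRange n).map σ).length = n := by
      rw [List.length_map, List.length_finRange]
    have hk1 : k < ((List.finRange n).map σ).length := by omega
    have hk2 : k + 1 < ((List.finRange n).map σ).length := by omega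
    rw [ca, ca, dif_pos hk1, dif_pos hk2]
    have hg : ∀ (m : ℕ) (hm : m < ((List.finRange n).map σ).length),
        ((List.finRange n).map σ)[m] = σ ⟨m, by omega⟩ := by
      intro m hm
      rw [List.getElem_map]
      congr 1
      exact Fin.ext (by simp [List.getElem_finRange])
    rw [hg k hk1, hg (k+1) hk2]
    have hmono := Tuple.monotone_sort (fun i => -φ i)
    have := hmono (a := ⟨k, by omega⟩) (b := ⟨k+1, by omega⟩) (by simp)
    simp only [Function.comp_apply] at this
    rw [← hσ] at this
    linarith

/-- gval is additive in `z` given a decomposition as a sum -/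
lemma gval_sum (T : Finset (Finset ℕ)) (c : Finset ℕ → ℕ)
    (w : Finset ℕ → Finset (Fin n) → ℝ) (z : Finset (Fin n) → ℝ)
    (hz : ∀ A, z A = ∑ I ∈ T, (c I : ℝ) * w I A) (φ : Fin n → ℝ) (L : List (Fin n)) :
    gval z φ L = ∑ I ∈ T, (c I : ℝ) * gval (w I) φ L := by
  unfold gval
  simp only [hz, Finset.mul_sum]
  rw [Finset.sum_comm]
  apply Finset.sum_congr rfl
  intro I _
  apply Finset.sum_congr rfl
  intro k _
  ring

/-- the enumeration list of the multiset with multiplicities `c` -/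
def enumList (T : Finset (Finset ℕ)) (c : Finset ℕ → ℕ) : List (Finset ℕ) :=
  T.toList.flatMap (fun I => List.replicate (c I) I)

lemma enumList_mem {T : Finset (Finset ℕ)} {c : Finset ℕ → ℕ} {x : Finset ℕ}
    (h : x ∈ enumList T c) : x ∈ T := by
  rw [enumList, List.mem_flatMap] at h
  obtain ⟨I, hI, hx⟩ := h
  rw [List.eq_of_mem_replicate hx]
  exact Finset.mem_toList.1 hI

lemma enumList_sum {M : Type*} [AddCommMonoid M] (T : Finset (Finset ℕ))
    (c : Finset ℕ → ℕ) (f : Finset ℕ → M) :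
    ((enumList T c).map f).sum = ∑ I ∈ T, c I • f I := by
  have h1 : ∀ (l : List (Finset ℕ)) (g : Finset ℕ → List M),
      (l.flatMap g).sum = (l.map (fun a => (g a).sum)).sum := by
    intro l g
    rw [List.flatMap, List.sum_flatten, List.map_map]
    rfl
  rw [enumList, List.map_flatMap, h1, ← Finset.sum_map_toList]
  congr 1
  apply List.map_congr_left
  intro I _
  rw [List.map_replicate, List.sum_replicate]

lemma fin_sum_list {M : Type*} [AddCommMonoid M] (LL : List (Finset ℕ))
    (f : Finset ℕ → M) :
    ∑ j : Fin LL.length, f (LL.get j) = (LL.map f).sum := by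
  rw [← Fin.sum_univ_getElem (LL.map f)]
  have hlen : LL.length = (LL.map f).length := (List.length_map _).symm
  rw [← Fin.sum_congr' (fun i : Fin (LL.map f).length => (LL.map f)[(i : ℕ)]) hlen]
  apply Finset.sum_congr rfl
  intro j _
  have hj : (j : ℕ) < LL.length := j.2
  rw [List.getElem_map]
  rfl


variable {n : ℕ}

/-- the indicator vector of `B ⊆ [n]` -/
def ind (n : ℕ) (B : Finset ℕ) : Fin n → ℝ := fun i => if (i : ℕ) + 1 ∈ B then 1 else 0

lemma ind_sum (A : Finset (Fin n)) (B : Finset ℕ) :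
    ∑ i ∈ A, ind n B i = ((img A ∩ B).card : ℝ) := by
  classical
  unfold ind
  rw [Finset.sum_boole]
  congr 1
  refine Finset.card_bij (fun i _ => (i : ℕ) + 1) ?_ ?_ ?_
  · intro i hi
    have h := Finset.mem_filter.1 hi
    exact Finset.mem_inter.2 ⟨Finset.mem_image_of_mem _ h.1, h.2⟩
  · intro i _ j _ h
    exact emb_inj h
  · intro x hx
    have h := Finset.mem_inter.1 hx
    obtain ⟨i, hi, rfl⟩ := Finset.mem_image.1 h.1
    exact ⟨i, Finset.mem_filter.2 ⟨hi, h.2⟩, rfl⟩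

lemma vertexSet_finite (I : Finset ℕ) :
    Set.Finite {v : Fin n → ℝ | ∃ B : Finset ℕ, B ⊆ Finset.Icc 1 n ∧ galeLE B I ∧
      v = fun i : Fin n => if (i : ℕ) + 1 ∈ B then (1 : ℝ) else 0} := by
  classical
  apply Set.Finite.subset (Set.Finite.image (fun B => ind n B)
    (Finset.finite_toSet ((Finset.Icc 1 n).powerset)))
  rintro v ⟨B, hB, _, rfl⟩
  exact ⟨B, Finset.mem_coe.2 (Finset.mem_powerset.2 hB), rfl⟩

lemma polytope_compact (I : Finset ℕ) : IsCompact (schubertPolytope n I) :=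
  (vertexSet_finite I).isCompact_convexHull ℝ

lemma polytope_convex (I : Finset ℕ) : Convex ℝ (schubertPolytope n I) :=
  convex_convexHull _ _

lemma sum_isLinear (A : Finset (Fin n)) :
    IsLinearMap ℝ (fun p : Fin n → ℝ => ∑ i ∈ A, p i) := by
  constructor
  · intro p q; simp [Finset.sum_add_distrib]
  · intro c p; simp [Finset.mul_sum]

lemma mem_polytope_sum_le {I : Finset ℕ} {p : Fin n → ℝ}
    (hp : p ∈ schubertPolytope n I) (A : Finset (Fin n)) :
    ∑ i ∈ A, p i ≤ (schubertRank n  I (img A) : ℝ) := by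
  have hconv : Convex ℝ {w : Fin n → ℝ | ∑ i ∈ A, w i ≤ (schubertRank n I (img A) : ℝ)} :=
    convex_halfSpace_le (sum_isLinear A) _
  have hsub : {v : Fin n → ℝ | ∃ B : Finset ℕ, B ⊆ Finset.Icc 1 n ∧ galeLE B I ∧
      v = fun i : Fin n => if (i : ℕ) + 1 ∈ B then (1 : ℝ) else 0} ⊆
      {w : Fin n → ℝ | ∑ i ∈ A, w i ≤ (schubertRank n I (img A) : ℝ)} := by
    rintro v ⟨B, hB, hg, rfl⟩
    have h1 : ∑ i ∈ A, ind n B i = ((img A ∩ B).card : ℝ) := ind_sum A B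
    have h2 : (img A ∩ B).card ≤ schubertRank n I (img A) := le_schubertRank hB hg
    show ∑ i ∈ A, ind n B i ≤ _
    rw [h1]
    exact_mod_cast h2
  exact convexHull_min hsub hconv hp

lemma mem_polytope_sum_eq {I : Finset ℕ} {p : Fin n → ℝ}
    (hp : p ∈ schubertPolytope n I) :
    ∑ i, p i = (I.card : ℝ) := by
  have hconv : Convex ℝ {w : Fin n → ℝ | ∑ i, w i = (I.card : ℝ)} :=
    convex_hyperplane (sum_isLinear Finset.univ) _
  have hsub : {v : Fin n → ℝ | ∃ B : Finset ℕ, B ⊆ Finset.Icc 1 n ∧ galeLE B I ∧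
      v = fun i : Fin n => if (i : ℕ) + 1 ∈ B then (1 : ℝ) else 0} ⊆
      {w : Fin n → ℝ | ∑ i, w i = (I.card : ℝ)} := by
    rintro v ⟨B, hB, hg, rfl⟩
    show ∑ i, ind n B i = _
    rw [ind_sum Finset.univ B, img_univ, Finset.inter_eq_right.2 hB, hg.1]
  exact convexHull_min hsub hconv hp

lemma vertex_mem_polytope {I B : Finset ℕ} (hB : B ⊆ Finset.Icc 1 n)
    (hg : galeLE B I) : ind n B ∈ schubertPolytope n I :=
  subset_convexHull _ _ ⟨B, hB, hg, rfl⟩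


lemma rnk_univ'' {I : Finset ℕ} (hI : I ⊆ Finset.Icc 1 n) :
    schubertRank n I (img (Finset.univ : Finset (Fin n))) = I.card := rnk_univ hI

end SP
end

open SP in
theorem stmt_4 (n : ℕ) (hn : 1 ≤ n) (z : Finset (Fin n) → ℝ) (hz0 : z ∅ = 0)
    (hsub : ∀ A B : Finset (Fin n), z (A ∪ B) + z (A ∩ B) ≤ z A + z B)
    (P : Set (Fin n → ℝ))
    (hP : P = {t | (∀ A : Finset (Fin n), ∑ i ∈ A, t i ≤ z A) ∧
      ∑ i, t i = z Finset.univ}) :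
    IsSchubitope n P ↔
      ∃ c : Finset ℕ → ℕ, ∀ A : Finset (Fin n),
        z A = ∑ I ∈ (Finset.Icc 1 n).powerset.erase ∅,
          (c I : ℝ) * (schubertRank n I (Finset.image (fun i : Fin n => (i : ℕ) + 1) A) : ℝ) := by
  classical
  set T : Finset (Finset ℕ) := (Finset.Icc 1 n).powerset.erase ∅ with hT
  have hTsub : ∀ I ∈ T, I ⊆ Finset.Icc 1 n := by
    intro I hI
    exact Finset.mem_powerset.1 (Finset.mem_of_mem_erase hI)
  constructor
  · -- Schubitope → rank decomposition
    rintro ⟨k, Ifam, hIfam, hPeq⟩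
    refine ⟨fun I => (Finset.univ.filter (fun j : Fin k => Ifam j = I)).card, ?_⟩
    intro A
    have himg : Finset.image (fun i : Fin n => (i : ℕ) + 1) A = img A := rfl
    rw [himg]
    -- rewrite the RHS as a sum over j
    have hRHS : ∑ I ∈ T, (((Finset.univ.filter (fun j : Fin k => Ifam j = I)).card : ℝ))
          * (schubertRank n I (img A) : ℝ)
        = ∑ j : Fin k, (schubertRank n (Ifam j) (img A) : ℝ) := by
      rw [Finset.sum_comp (fun I => (schubertRank n I (img A) : ℝ)) Ifam]
      simp only [nsmul_eq_mul]
      rw [eq_comm]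
      apply Finset.sum_subset
      · intro I hI
        obtain ⟨j, _, rfl⟩ := Finset.mem_image.1 hI
        rcases hIfam j with ⟨hne, hsub'⟩
        exact Finset.mem_erase.2
          ⟨Finset.nonempty_iff_ne_empty.1 hne, Finset.mem_powerset.2 hsub'⟩
      · intro I _ hI
        have : (Finset.univ.filter (fun j : Fin k => Ifam j = I)) = ∅ := by
          apply Finset.filter_eq_empty_iff.2
          intro j _ hcon
          exact hI (Finset.mem_image.2 ⟨j, Finset.mem_univ j, hcon⟩)
        rw [this]
        simp
    rw [hRHS]
    -- two inequalities
    apply le_antisymm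
    · -- greedy point
      obtain ⟨L, hL, hSkA⟩ := exists_chain_through A
      set t := gpt z L with htdef
      have htP : t ∈ P := by
        rw [hP]
        refine ⟨gpt_sum_le hz0 hsub hL, ?_⟩
        have := gpt_sum_Sk hz0 hL n (le_refl n)
        rwa [Sk_univ hL] at this
      have hzA : z A = ∑ i ∈ A, t i := by
        have hcard : A.card ≤ n := by
          have := Finset.card_le_univ A
          simpa using this
        have := gpt_sum_Sk hz0 hL A.card hcard
        rw [hSkA] at this
        exact this.symm
      rw [hzA]
      rw [hPeq] at htP
      obtain ⟨p, hp, hpt⟩ := htP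
      rw [hpt]
      have hswap : ∑ i ∈ A, (∑ j : Fin k, p j) i = ∑ j : Fin k, ∑ i ∈ A, p j i := by
        rw [Finset.sum_congr rfl (fun i _ => Finset.sum_apply i Finset.univ p)]
        exact Finset.sum_comm
      rw [hswap]
      exact Finset.sum_le_sum (fun j _ => mem_polytope_sum_le (hp j) A)
    · -- explicit point of P
      have hch : ∀ j : Fin k, ∃ B, B ⊆ Finset.Icc 1 n ∧ galeLE B (Ifam j) ∧
          (img A ∩ B).card = schubertRank n (Ifam j) (img A) :=
        fun j => exists_basis_rank (hIfam j).2
      choose Bv hBv1 hBv2 hBv3 using hch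
      set q : Fin n → ℝ := ∑ j : Fin k, ind n (Bv j) with hq
      have hqP : q ∈ P := by
        rw [hPeq]
        exact ⟨fun j => ind n (Bv j),
          fun j => vertex_mem_polytope (hBv1 j) (hBv2 j), rfl⟩
      have hqle : ∑ i ∈ A, q i ≤ z A := by
        rw [hP] at hqP
        exact hqP.1 A
      have hqval : ∑ i ∈ A, q i = ∑ j : Fin k, (schubertRank n (Ifam j) (img A) : ℝ) := by
        rw [hq]
        have hswap : ∑ i ∈ A, (∑ j : Fin k, ind n (Bv j)) i
            = ∑ j : Fin k, ∑ i ∈ A, ind n (Bv j) i := by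
          rw [Finset.sum_congr rfl (fun i _ => Finset.sum_apply i Finset.univ _)]
          exact Finset.sum_comm
        rw [hswap]
        apply Finset.sum_congr rfl
        intro j _
        rw [ind_sum, hBv3 j]
      rw [← hqval]
      exact hqle
  · -- rank decomposition → Schubitope
    rintro ⟨c, hc⟩
    have hc' : ∀ A : Finset (Fin n), z A
        = ∑ I ∈ T, (c I : ℝ) * (schubertRank n I (img A) : ℝ) := hc
    set LL := enumList T c with hLL
    refine ⟨LL.length, fun j => LL.get j, ?_, ?_⟩
    · intro j
      have hmem : LL.get j ∈ T := enumList_mem (List.get_mem LL j)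
      have h2 := Finset.mem_erase.1 hmem
      exact ⟨Finset.nonempty_iff_ne_empty.2 h2.1, Finset.mem_powerset.1 h2.2⟩
    · -- the set equality
      set S : Set (Fin n → ℝ) := {x | ∃ p : Fin LL.length → Fin n → ℝ,
        (∀ j, p j ∈ schubertPolytope n (LL.get j)) ∧ x = ∑ j, p j} with hS
      -- S is a compact convex set
      have hSimg : S = (fun p : Fin LL.length → Fin n → ℝ => ∑ j, p j) ''
          (Set.univ.pi fun j => schubertPolytope n (LL.get j)) := by
        ext x
        constructor
        · rintro ⟨p, hp, rfl⟩
          exact ⟨p, fun j _ => hp j, rfl⟩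
        · rintro ⟨p, hp, rfl⟩
          exact ⟨p, fun j => hp j (Set.mem_univ j), rfl⟩
      have hScl : IsClosed S := by
        rw [hSimg]
        apply IsCompact.isClosed
        apply IsCompact.image
        · exact isCompact_univ_pi (fun j => polytope_compact _)
        · exact continuous_finset_sum _ (fun j _ => continuous_apply j)
      have hSconv : Convex ℝ S := by
        rw [hSimg]
        apply Convex.is_linear_image
        · exact convex_pi (fun j _ => polytope_convex _)
        · constructor
          · intro p q'; ext i; simp [Finset.sum_apply, Finset.sum_add_distrib]
          · intro r p; ext i; simp [Finset.sum_apply, Finset.mul_sum]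
      rw [hP]
      apply Set.Subset.antisymm
      · -- P ⊆ S by separation
        intro t ht
        obtain ⟨ht1, ht2⟩ := ht
        by_contra htS
        obtain ⟨f, u, hfu, hub⟩ := geometric_hahn_banach_point_closed hSconv hScl htS
        set φ : Fin n → ℝ := fun i => -(f (fun j => if i = j then 1 else 0)) with hφ
        have hfrep : ∀ x : Fin n → ℝ, ∑ i, φ i * x i = -(f x) := by
          intro x
          have := LinearMap.pi_apply_eq_sum_univ (f : (Fin n → ℝ) →ₗ[ℝ] ℝ) x
          simp only [ContinuousLinearMap.coe_coe] at this
          rw [this, ← Finset.sum_neg_distrib]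
          apply Finset.sum_congr rfl
          intro i _
          rw [hφ]
          simp [smul_eq_mul]
          ring
        obtain ⟨L, hL, hmono⟩ := exists_sorted_chain φ
        have hb1 : ∑ i, φ i * t i ≤ gval z φ L := abel_bound hn φ hL hmono z t ht1 ht2
        have hb2 : gval z φ L = ∑ I ∈ T, (c I : ℝ) *
            gval (fun A => (schubertRank n I (img A) : ℝ)) φ L :=
          gval_sum T c _ z hc' φ L
        -- choose vertices
        have hch : ∀ I : Finset ℕ, ∃ B, I ⊆ Finset.Icc 1 n →
            (B ⊆ Finset.Icc 1 n ∧ galeLE B I ∧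
            (∑ i, φ i * ind n B i)
              = gval (fun A => (schubertRank n I (img A) : ℝ)) φ L) := by
          intro I
          by_cases hI : I ⊆ Finset.Icc 1 n
          · obtain ⟨B, h1, h2, h3⟩ := exists_schubert_vertex hI φ hL
            exact ⟨B, fun _ => ⟨h1, h2, h3⟩⟩
          · exact ⟨∅, fun h => absurd h hI⟩
        choose Bv hBv using hch
        set q : Fin n → ℝ := ∑ j : Fin LL.length, ind n (Bv (LL.get j)) with hq
        have hqS : q ∈ S := by
          refine ⟨fun j => ind n (Bv (LL.get j)), ?_, rfl⟩
          intro j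
          have hmem := enumList_mem (List.get_mem LL j)
          obtain ⟨h1, h2, _⟩ := hBv (LL.get j) (hTsub _ hmem)
          exact vertex_mem_polytope h1 h2
        have hqval : ∑ i, φ i * q i = ∑ I ∈ T, (c I : ℝ) *
            gval (fun A => (schubertRank n I (img A) : ℝ)) φ L := by
          rw [hq]
          have hswap : ∑ i, φ i * (∑ j : Fin LL.length, ind n (Bv (LL.get j))) i
              = ∑ j : Fin LL.length, ∑ i, φ i * ind n (Bv (LL.get j)) i := by
            rw [Finset.sum_congr rfl
              (fun i _ => by rw [Finset.sum_apply i Finset.univ _, Finset.mul_sum])]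
            exact Finset.sum_comm
          rw [hswap]
          have hterm : ∀ j : Fin LL.length, ∑ i, φ i * ind n (Bv (LL.get j)) i
              = gval (fun A => (schubertRank n (LL.get j) (img A) : ℝ)) φ L := by
            intro j
            have hmem := enumList_mem (List.get_mem LL j)
            exact (hBv (LL.get j) (hTsub _ hmem)).2.2
          rw [Finset.sum_congr rfl (fun j _ => hterm j)]
          rw [fin_sum_list LL (fun I => gval (fun A => (schubertRank n I (img A) : ℝ)) φ L),
            enumList_sum]
          apply Finset.sum_congr rfl
          intro I _
          rw [nsmul_eq_mul]
        have hfinal : ∑ i, φ i * t i ≤ ∑ i, φ i * q i := by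
          rw [hqval, ← hb2]
          exact hb1
        rw [hfrep t, hfrep q] at hfinal
        have hq2 := hub q hqS
        linarith
      · -- S ⊆ P
        rintro x ⟨p, hp, rfl⟩
        constructor
        · intro A
          have hswap : ∑ i ∈ A, (∑ j, p j) i = ∑ j, ∑ i ∈ A, p j i := by
            rw [Finset.sum_congr rfl (fun i _ => Finset.sum_apply i Finset.univ p)]
            exact Finset.sum_comm
          rw [hswap, hc' A]
          calc ∑ j, ∑ i ∈ A, p j i
              ≤ ∑ j, (schubertRank n (LL.get j) (img A) : ℝ) :=
                Finset.sum_le_sum (fun j _ => mem_polytope_sum_le (hp j) A)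
            _ = ∑ I ∈ T, (c I : ℝ) * (schubertRank n I (img A) : ℝ) := by
                rw [fin_sum_list LL (fun I => (schubertRank n I (img A) : ℝ)), enumList_sum]
                apply Finset.sum_congr rfl
                intro I _
                rw [nsmul_eq_mul]
        · have hswap : ∑ i, (∑ j, p j) i = ∑ j, ∑ i, p j i := by
            rw [Finset.sum_congr rfl (fun i _ => Finset.sum_apply i Finset.univ p)]
            exact Finset.sum_comm
          rw [hswap, hc' Finset.univ]
          calc ∑ j, ∑ i, p j i = ∑ j, ((LL.get j).card : ℝ) :=
                Finset.sum_congr rfl (fun j _ => mem_polytope_sum_eq (hp j))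
            _ = ∑ I ∈ T, (c I : ℝ) * (I.card : ℝ) := by
                rw [fin_sum_list LL (fun I => (I.card : ℝ)), enumList_sum]
                apply Finset.sum_congr rfl
                intro I _
                rw [nsmul_eq_mul]
            _ = ∑ I ∈ T, (c I : ℝ) * (schubertRank n I (img Finset.univ) : ℝ) := by
                apply Finset.sum_congr rfl
                intro I hI
                rw [rnk_univ'' (hTsub I hI)]
end
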